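/- arXiv:2506.12648 — 7 statements merged into one kernel-verified Lean document; each statement's English description precedes it below -/
import Mathlib

section
/- Let f : ℝ^d → ℝ be differentiable, glocally (L, L_*, δ)-smooth, and μ-strongly convex with minimum value f_*. Let w₀ ∈ ℝ^d, set Δ₀ = f(w₀) − f_*, and assume Δ₀ > δ > ε > 0. Let (w_t) be gradient-descent iterates w_{t+1} = w_t − η_t∇f(w_t) with each η_t chosen by exact line optimization. Then f(w_T) − f_* ≤ ε for every natural number T with T ≥ ⌈(L/μ)log(Δ₀/δ)⌉ + ⌈(L_*/μ)log(δ/ε)⌉. -/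
open scoped RealInnerProductSpace

section Aux
variable {E : Type*} [NormedAddCommGroup E] [InnerProductSpace ℝ E] [CompleteSpace E]
variable (f : E → ℝ) (f' : E → E)

lemma lineDerivAux (hdiff : ∀ x, HasGradientAt f (f' x) x) (u g : E) (s : ℝ) :
    HasDerivAt (fun s : ℝ => f (u + s • g)) (⟪f' (u + s • g), g⟫) s := by
  have hc : HasDerivAt (fun s : ℝ => u + s • g) g s := by
    simpa using ((hasDerivAt_id s).smul_const g).const_add u
  have := ((hdiff (u + s • g)).hasFDerivAt).comp_hasDerivAt s hc
  simpa [InnerProductSpace.toDual_apply_apply, Function.comp_def] using this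

lemma descent_segment (hdiff : ∀ x, HasGradientAt f (f' x) x)
    (hcont : Continuous f') (u v : E) (C : ℝ)
    (hK : ∀ s ∈ Set.Icc (0:ℝ) 1, ‖f' (u + s • (v - u)) - f' u‖ ≤ C * (s * ‖v - u‖)) :
    f v ≤ f u + ⟪f' u, v - u⟫ + C / 2 * ‖v - u‖ ^ 2 := by
  set ψ : ℝ → ℝ := fun s => ⟪f' (u + s • (v - u)), v - u⟫ with hψ
  have hcψ : Continuous ψ := by
    apply Continuous.inner (hcont.comp (by continuity)) continuous_const
  have hint : f v - f u = ∫ s in (0:ℝ)..1, ψ s := by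
    have := intervalIntegral.integral_eq_sub_of_hasDerivAt
      (f := fun s : ℝ => f (u + s • (v - u))) (f' := ψ)
      (fun s _ => lineDerivAux f f' hdiff u (v - u) s)
      (hcψ.intervalIntegrable 0 1)
    simpa using this.symm
  have hmono : ∫ s in (0:ℝ)..1, ψ s ≤
      ∫ s in (0:ℝ)..1, (⟪f' u, v - u⟫ + C * ‖v - u‖ ^ 2 * s) := by
    apply intervalIntegral.integral_mono_on (by norm_num)
      (hcψ.intervalIntegrable 0 1) (by apply Continuous.intervalIntegrable; continuity)
    intro s hs
    have h1 : ψ s - ⟪f' u, v - u⟫ = ⟪f' (u + s • (v - u)) - f' u, v - u⟫ := by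
      simp [hψ, inner_sub_left]
    have h2 : ⟪f' (u + s • (v - u)) - f' u, v - u⟫ ≤ C * (s * ‖v - u‖) * ‖v - u‖ :=
      le_trans (real_inner_le_norm _ _) (by
        have := hK s hs
        nlinarith [norm_nonneg (v - u)])
    nlinarith [h2, h1]
  have hval : ∫ s in (0:ℝ)..1, (⟪f' u, v - u⟫ + C * ‖v - u‖ ^ 2 * s)
      = ⟪f' u, v - u⟫ + C / 2 * ‖v - u‖ ^ 2 := by
    rw [intervalIntegral.integral_add (intervalIntegrable_const)
      (by apply Continuous.intervalIntegrable; continuity),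
      intervalIntegral.integral_const_mul, integral_id]
    simp; ring
  linarith [hint, hmono, hval.le, hval.ge]

/-- convexity along segments, from the gradient inequality -/
lemma cvx_mix {μ : ℝ} (hμ : 0 ≤ μ)
    (hsc : ∀ u v, f v ≥ f u + ⟪f' u, v - u⟫ + μ / 2 * ‖v - u‖ ^ 2)
    (u v : E) (s : ℝ) (hs : 0 ≤ s) (hs1 : s ≤ 1) :
    f (u + s • (v - u)) ≤ f u + s * (f v - f u) := by
  set m := u + s • (v - u) with hm
  have hum : u - m = (-s) • (v - u) := by rw [hm]; module
  have hvm : v - m = (1 - s) • (v - u) := by rw [hm]; module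
  have h1 := hsc m u
  have h2 := hsc m v
  rw [hum] at h1
  rw [hvm] at h2
  rw [real_inner_smul_right] at h1 h2
  set c := ⟪f' m, v - u⟫
  have hn1 : (0:ℝ) ≤ μ / 2 * ‖(-s) • (v - u)‖ ^ 2 := by positivity
  have hn2 : (0:ℝ) ≤ μ / 2 * ‖(1 - s) • (v - u)‖ ^ 2 := by positivity
  have h1' : f m + (-s) * c ≤ f u := by linarith
  have h2' : f m + (1 - s) * c ≤ f v := by linarith
  have e1 : (1 - s) * (f m + (-s) * c) ≤ (1 - s) * f u :=
    mul_le_mul_of_nonneg_left h1' (by linarith)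
  have e2 : s * (f m + (1 - s) * c) ≤ s * f v :=
    mul_le_mul_of_nonneg_left h2' hs
  nlinarith [e1, e2]

end Aux



set_option maxHeartbeats 1000000 in
/-- Iteration complexity of gradient descent with exact line optimization
under glocal (L, L_*, δ)-smoothness and μ-strong convexity. -/
theorem gd_lo_glocal_complexity {d : ℕ}
    (f : EuclideanSpace ℝ (Fin d) → ℝ)
    (f' : EuclideanSpace ℝ (Fin d) → EuclideanSpace ℝ (Fin d))
    (L Ls δ ε μ fstar : ℝ)
    (hL : 0 < L) (hLs : 0 < Ls) (hμ : 0 < μ)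
    (hdiff : ∀ x, HasGradientAt f (f' x) x)
    (hglob : ∀ u v, ‖f' u - f' v‖ ≤ L * ‖u - v‖)
    (hloc : ∀ u v, f u - fstar ≤ δ → f v - fstar ≤ δ → ‖f' u - f' v‖ ≤ Ls * ‖u - v‖)
    (hsc : ∀ u v, f v ≥ f u + ⟪f' u, v - u⟫ + μ / 2 * ‖v - u‖ ^ 2)
    (hmin : ∃ wstar, f wstar = fstar ∧ ∀ x, fstar ≤ f x)
    (w : ℕ → EuclideanSpace ℝ (Fin d))
    (hΔδ : f (w 0) - fstar > δ) (hδε : δ > ε) (hε : ε > 0)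
    (hstep : ∀ t : ℕ,
      (∃ η : ℝ, w (t + 1) = w t - η • f' (w t)) ∧
        ∀ η : ℝ, f (w (t + 1)) ≤ f (w t - η • f' (w t))) :
    ∀ T : ℕ,
      (⌈L / μ * Real.log ((f (w 0) - fstar) / δ)⌉ + ⌈Ls / μ * Real.log (δ / ε)⌉ : ℤ) ≤ T →
      f (w T) - fstar ≤ ε := by
  obtain ⟨wstar, hws, hlb⟩ := hmin
  have hδ : 0 < δ := lt_trans hε hδε
  have hfc : Continuous f := Differentiable.continuous (fun x => (hdiff x).differentiableAt)
  have hgc : Continuous f' := by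
    refine (LipschitzWith.of_dist_le_mul (K := L.toNNReal) ?_).continuous
    intro x y
    rw [dist_eq_norm, dist_eq_norm]
    simpa [Real.coe_toNNReal L hL.le] using hglob x y
  have hΔ0 : ∀ t, 0 ≤ f (w t) - fstar := fun t => by linarith [hlb (w t)]
  -- PL inequality
  have hPL : ∀ u, 2 * μ * (f u - fstar) ≤ ‖f' u‖ ^ 2 := by
    intro u
    have h := hsc u wstar
    rw [hws] at h
    have hin : -(‖f' u‖ * ‖wstar - u‖) ≤ ⟪f' u, wstar - u⟫ :=
      (abs_le.mp (abs_real_inner_le_norm _ _)).1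
    nlinarith [sq_nonneg (‖f' u‖ - μ * ‖wstar - u‖), hμ]
  -- descent with step 1/C given segment Lipschitz bound
  have hkey : ∀ (u : EuclideanSpace ℝ (Fin d)) (C : ℝ), 0 < C →
      (∀ s ∈ Set.Icc (0:ℝ) 1,
        ‖f' (u + s • ((u - (1/C) • f' u) - u)) - f' u‖ ≤ C * (s * ‖(u - (1/C) • f' u) - u‖)) →
      f (u - (1/C) • f' u) ≤ f u - ‖f' u‖ ^ 2 / (2 * C) := by
    intro u C hC hK
    have hds := descent_segment f f' hdiff hgc u (u - (1/C) • f' u) C hK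
    have hvu : (u - (1/C) • f' u) - u = -((1/C) • f' u) := by abel
    rw [hvu, inner_neg_right, real_inner_smul_right, real_inner_self_eq_norm_sq,
      norm_neg, norm_smul, Real.norm_eq_abs, abs_of_nonneg (by positivity : (0:ℝ) ≤ 1/C)]
      at hds
    have hid : C / 2 * (1/C * ‖f' u‖) ^ 2 - 1/C * ‖f' u‖ ^ 2 = -(‖f' u‖ ^ 2 / (2 * C)) := by
      field_simp; ring
    nlinarith [hds, hid]
  -- global one-step contraction
  have hstep1 : ∀ t, f (w (t+1)) - fstar ≤ (1 - μ/L) * (f (w t) - fstar) := by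
    intro t
    have hK : ∀ s ∈ Set.Icc (0:ℝ) 1,
        ‖f' (w t + s • ((w t - (1/L) • f' (w t)) - w t)) - f' (w t)‖
          ≤ L * (s * ‖(w t - (1/L) • f' (w t)) - w t‖) := by
      intro s hs
      refine le_trans (hglob _ _) (le_of_eq ?_)
      rw [add_sub_cancel_left, norm_smul, Real.norm_eq_abs, abs_of_nonneg hs.1]
    have h1 := hkey (w t) L hL hK
    have h2 := (hstep t).2 (1/L)
    have h3 := hPL (w t)
    have h4 : μ/L * (f (w t) - fstar) ≤ ‖f' (w t)‖ ^ 2 / (2 * L) := by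
      rw [le_div_iff₀ (by positivity)]
      have he : μ/L * (f (w t) - fstar) * (2*L) = 2*μ*(f (w t) - fstar) := by
        field_simp
      linarith [h3, he.le, he.ge]
    linarith
  -- local one-step contraction
  have hstepLoc : ∀ t, f (w t) - fstar ≤ δ →
      f (w (t+1)) - fstar ≤ (1 - μ/Ls) * (f (w t) - fstar) := by
    intro t ht
    set u := w t with hu
    by_cases hg0 : f' u = 0
    · have h2 := (hstep t).2 0
      have h3 := hPL u
      rw [hg0] at h3
      simp at h2 h3
      have hΔt : f u - fstar = 0 := le_antisymm (by nlinarith) (hΔ0 t)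
      rw [hΔt, mul_zero]
      have := hΔ0 t
      linarith
    · have hgn : 0 < ‖f' u‖ := norm_pos_iff.mpr hg0
      set c := 1/Ls with hc
      have hcpos : 0 < c := by positivity
      have hφc : Continuous (fun η : ℝ => f (u - η • f' u)) :=
        hfc.comp (continuous_const.sub (continuous_id.smul continuous_const))
      set K := Set.Icc (0:ℝ) c ∩ {η : ℝ | f (u - η • f' u) ≤ f u} with hK
      have hcomp : IsCompact K := isCompact_Icc.inter_right (isClosed_le hφc continuous_const)
      have hne : K.Nonempty := ⟨0, ⟨le_refl 0, hcpos.le⟩, by simp⟩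
      set b := sSup K with hb
      have hbK : b ∈ K := hcomp.sSup_mem hne
      obtain ⟨⟨hb0, hbc⟩, hbφ⟩ := hbK
      simp only [Set.mem_setOf_eq] at hbφ
      have hub : ∀ x ∈ K, x ≤ b := fun x hx => le_csSup hcomp.bddAbove hx
      -- norm of displacement
      have hnrm : ∀ η : ℝ, 0 ≤ η → ‖(u - η • f' u) - u‖ = η * ‖f' u‖ := by
        intro η hη
        rw [sub_sub_cancel_left, norm_neg, norm_smul, Real.norm_eq_abs, abs_of_nonneg hη]
      -- inner product lower bound, generic in Lipschitz constant
      have hinner : ∀ (η C' : ℝ), 0 ≤ η →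
          ‖f' (u - η • f' u) - f' u‖ ≤ C' * ‖(u - η • f' u) - u‖ →
          (1 - C' * η) * ‖f' u‖ ^ 2 ≤ ⟪f' (u - η • f' u), f' u⟫ := by
        intro η C' hη hlip
        rw [hnrm η hη] at hlip
        have hcs : -(C' * (η * ‖f' u‖) * ‖f' u‖) ≤ ⟪f' (u - η • f' u) - f' u, f' u⟫ := by
          have h1 := (abs_le.mp (abs_real_inner_le_norm (f' (u - η • f' u) - f' u) (f' u))).1
          nlinarith [norm_nonneg (f' u)]
        have hexp : ⟪f' (u - η • f' u), f' u⟫ = ⟪f' (u - η • f' u) - f' u, f' u⟫ + ‖f' u‖ ^ 2 := by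
          rw [inner_sub_left, real_inner_self_eq_norm_sq]; ring
        nlinarith [hcs, hexp]
      -- strong-convexity strict decrease, generic
      have hdec : ∀ η : ℝ, 0 ≤ η → 0 ≤ ⟪f' (u - η • f' u), f' u⟫ →
          f (u - η • f' u) ≤ f u - μ/2 * η^2 * ‖f' u‖^2 := by
        intro η hη hip
        have h := hsc (u - η • f' u) u
        rw [sub_sub_cancel, real_inner_smul_right, norm_smul, Real.norm_eq_abs,
          abs_of_nonneg hη] at h
        nlinarith [mul_nonneg hη hip]
      have hbceq : b = c := by
        by_contra hne'
        have hblt : b < c := lt_of_le_of_ne hbc hne'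
        rcases eq_or_lt_of_le hb0 with hb0' | hb0'
        · -- b = 0 : small global-smoothness step enters K
          set η := min (1/L) c with hη
          have hηpos : 0 < η := lt_min (by positivity) hcpos
          have hip : 0 ≤ ⟪f' (u - η • f' u), f' u⟫ := by
            have h1 := hinner η L hηpos.le (hglob _ _)
            have h2 : L * η ≤ 1 := by
              have : η ≤ 1/L := min_le_left _ _
              rw [le_div_iff₀ hL] at this
              linarith [this]
            nlinarith [sq_nonneg ‖f' u‖]
          have hφη : f (u - η • f' u) ≤ f u := by
            have h' := hdec η hηpos.le hip
            have hterm : 0 ≤ μ/2 * η^2 * ‖f' u‖^2 := by positivity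
            linarith [h', hterm]
          have : η ≤ b := hub η ⟨⟨hηpos.le, min_le_right _ _⟩, hφη⟩
          rw [← hb0'] at this
          linarith
        · -- 0 < b < c : strict decrease plus continuity extends beyond b
          have hsubb : f (u - b • f' u) - fstar ≤ δ := by linarith
          have hip : 0 ≤ ⟪f' (u - b • f' u), f' u⟫ := by
            have h1 := hinner b Ls hb0 (hloc _ _ hsubb (by linarith))
            have h2 : Ls * b ≤ 1 := by
              rw [hc, le_div_iff₀ hLs] at hbc
              linarith [hbc]
            nlinarith [sq_nonneg ‖f' u‖]
          have hstrict : f (u - b • f' u) < f u := by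
            have h' := hdec b hb0 hip
            have hterm : 0 < μ/2 * b^2 * ‖f' u‖^2 :=
              mul_pos (mul_pos (by linarith : (0:ℝ) < μ/2) (pow_pos hb0' 2)) (pow_pos hgn 2)
            linarith [h', hterm]
          have hopen : IsOpen {x : ℝ | f (u - x • f' u) < f u} :=
            isOpen_lt hφc continuous_const
          obtain ⟨r, hr, hball⟩ := Metric.isOpen_iff.mp hopen b hstrict
          set x := min (b + r/2) c with hx
          have hxb : b < x := lt_min (by linarith) hblt
          have hxball : x ∈ Metric.ball b r := by
            rw [Metric.mem_ball, Real.dist_eq, abs_of_pos (by linarith)]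
            have : x ≤ b + r/2 := min_le_left _ _
            linarith
          have hxK : x ∈ K :=
            Set.mem_inter (Set.mem_Icc.mpr ⟨by linarith, min_le_right _ _⟩)
              ((hball hxball).le : f (u - x • f' u) ≤ f u)
          linarith [hub x hxK]
      -- now the full step to c is in the sublevel set
      have hφcle : f (u - c • f' u) ≤ f u := by rw [← hbceq]; exact hbφ
      -- segment Lipschitz bound for descent_segment
      have hKseg : ∀ s ∈ Set.Icc (0:ℝ) 1,
          ‖f' (u + s • ((u - (1/Ls) • f' u) - u)) - f' u‖
            ≤ Ls * (s * ‖(u - (1/Ls) • f' u) - u‖) := by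
        intro s hs
        have hpt : u + s • ((u - (1/Ls) • f' u) - u) = u - (s * (1/Ls)) • f' u := by
          rw [sub_sub_cancel_left, smul_neg, smul_smul, sub_eq_add_neg]
        rw [hpt]
        have hmix := cvx_mix f f' hμ.le hsc u (u - (1/Ls) • f' u) s hs.1 hs.2
        rw [hpt] at hmix
        have hfvle : f (u - (1/Ls) • f' u) ≤ f u := by rw [← hc]; exact hφcle
        have hsl : f (u - (s * (1/Ls)) • f' u) - fstar ≤ δ := by
          have := mul_nonpos_of_nonneg_of_nonpos hs.1 (sub_nonpos.mpr hfvle)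
          nlinarith [hmix, this, ht]
        refine le_trans (hloc _ u hsl (by linarith)) (le_of_eq ?_)
        rw [hnrm (s * (1/Ls)) (mul_nonneg hs.1 (by positivity)), hnrm (1/Ls) (by positivity)]
        ring
      have h1 := hkey u Ls hLs (by rw [← hc] at hKseg ⊢; exact hKseg)
      rw [← hc] at h1
      have h2 := (hstep t).2 c
      have h3 := hPL u
      have h4 : μ/Ls * (f u - fstar) ≤ ‖f' u‖ ^ 2 / (2 * Ls) := by
        rw [le_div_iff₀ (by positivity)]
        have he : μ/Ls * (f u - fstar) * (2*Ls) = 2*μ*(f u - fstar) := by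
          field_simp
        linarith [h3, he.le, he.ge]
      rw [← hu] at h2
      linarith
  -- μ ≤ L from strong monotonicity at two distinct points
  have hw0ne : w 0 ≠ wstar := by
    intro h
    rw [h, hws] at hΔδ
    simp at hΔδ
    linarith
  have hμL : μ ≤ L := by
    have h1 := hsc (w 0) wstar
    have h2 := hsc wstar (w 0)
    have e1 : ⟪f' (w 0), wstar - w 0⟫ = -⟪f' (w 0), w 0 - wstar⟫ := by
      rw [← neg_sub, inner_neg_right]
    have e2 : ⟪f' wstar, w 0 - wstar⟫ = ⟪f' wstar, w 0 - wstar⟫ := rfl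
    have hcs : ⟪f' (w 0) - f' wstar, w 0 - wstar⟫ ≤ L * ‖w 0 - wstar‖ ^ 2 := by
      refine le_trans (real_inner_le_norm _ _) ?_
      have := hglob (w 0) wstar
      nlinarith [norm_nonneg (w 0 - wstar)]
    rw [inner_sub_left] at hcs
    have hnrm : ‖wstar - w 0‖ = ‖w 0 - wstar‖ := norm_sub_rev _ _
    rw [hnrm] at h1
    have hrpos : 0 < ‖w 0 - wstar‖ := norm_sub_pos_iff.mpr hw0ne
    have hkey2 : μ * ‖w 0 - wstar‖ ^ 2 ≤ L * ‖w 0 - wstar‖ ^ 2 := by linarith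
    exact (mul_le_mul_iff_of_pos_right (pow_pos hrpos 2)).mp (by linarith)
  -- numbers
  set Δ0 := f (w 0) - fstar with hΔ0def
  set a := L / μ * Real.log (Δ0 / δ) with ha
  set a2 := Ls / μ * Real.log (δ / ε) with ha2
  have hloga : 0 < Real.log (Δ0 / δ) := Real.log_pos (by rw [lt_div_iff₀ hδ]; linarith)
  have hloga2 : 0 < Real.log (δ / ε) := Real.log_pos (by rw [lt_div_iff₀ hε]; linarith)
  have hapos : 0 < a := by positivity
  have ha2pos : 0 < a2 := by positivity
  set T1 := (⌈a⌉).toNat with hT1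
  set T2 := (⌈a2⌉).toNat with hT2
  have hceila : (0:ℤ) ≤ ⌈a⌉ := by positivity
  have hceila2 : (0:ℤ) ≤ ⌈a2⌉ := by positivity
  have haT1 : a ≤ (T1 : ℝ) := by
    have h1 := Int.le_ceil a
    have h2 : ((T1 : ℤ) : ℝ) = ((⌈a⌉ : ℤ) : ℝ) := by
      rw [hT1, Int.toNat_of_nonneg hceila]
    push_cast at h2
    linarith
  have haT2 : a2 ≤ (T2 : ℝ) := by
    have h1 := Int.le_ceil a2
    have h2 : ((T2 : ℤ) : ℝ) = ((⌈a2⌉ : ℤ) : ℝ) := by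
      rw [hT2, Int.toNat_of_nonneg hceila2]
    push_cast at h2
    linarith
  have hρ1 : (0:ℝ) ≤ 1 - μ/L := by
    rw [sub_nonneg, div_le_one hL]; exact hμL
  have hρ1e : 1 - μ/L ≤ Real.exp (-(μ/L)) := by
    have := Real.add_one_le_exp (-(μ/L)); linarith
  -- phase 1
  have hphase1 : ∀ t : ℕ, f (w t) - fstar ≤ (1 - μ/L)^t * Δ0 := by
    intro t
    induction t with
    | zero => simp [hΔ0def]
    | succ n ih =>
      have := hstep1 n
      calc f (w (n+1)) - fstar ≤ (1 - μ/L) * (f (w n) - fstar) := this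
        _ ≤ (1 - μ/L) * ((1 - μ/L)^n * Δ0) := mul_le_mul_of_nonneg_left ih hρ1
        _ = (1 - μ/L)^(n+1) * Δ0 := by ring
  have hΔ0pos : 0 < Δ0 := by rw [hΔ0def]; linarith
  have hδT1 : f (w T1) - fstar ≤ δ := by
    have h1 := hphase1 T1
    have h2 : (1 - μ/L)^T1 ≤ Real.exp (-(μ/L))^T1 := pow_le_pow_left₀ hρ1 hρ1e T1
    have h3 : Real.exp (-(μ/L))^T1 = Real.exp (-(μ/L) * T1) := by
      rw [← Real.exp_nat_mul]; ring_nf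
    have h4 : -(μ/L) * T1 ≤ -Real.log (Δ0 / δ) := by
      have h5 : Real.log (Δ0/δ) = μ/L * (L/μ * Real.log (Δ0/δ)) := by field_simp
      have h6 : μ/L * a ≤ μ/L * T1 := mul_le_mul_of_nonneg_left haT1 (by positivity)
      rw [ha] at h6
      linarith [h5.le, h5.ge, h6]
    have h7 : Real.exp (-(μ/L) * T1) ≤ Real.exp (-Real.log (Δ0/δ)) := Real.exp_le_exp.mpr h4
    have h8 : Real.exp (-Real.log (Δ0/δ)) = δ / Δ0 := by
      rw [Real.exp_neg, Real.exp_log (by positivity)]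
      rw [inv_div]
    have h9 : (1 - μ/L)^T1 * Δ0 ≤ (δ/Δ0) * Δ0 := by
      apply mul_le_mul_of_nonneg_right _ hΔ0pos.le
      rw [← h8]
      exact le_trans h2 (by rw [h3]; exact h7)
    have h10 : (δ/Δ0) * Δ0 = δ := by field_simp
    linarith
  -- phase 2
  set ρ := max 0 (1 - μ/Ls) with hρ
  have hρ0 : 0 ≤ ρ := le_max_left _ _
  have hρle1 : ρ ≤ 1 := by
    apply max_le (by norm_num)
    have : 0 < μ/Ls := by positivity
    linarith
  have hρe : ρ ≤ Real.exp (-(μ/Ls)) := by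
    apply max_le (Real.exp_pos _).le
    have := Real.add_one_le_exp (-(μ/Ls)); linarith
  have hphase2 : ∀ k : ℕ, f (w (T1 + k)) - fstar ≤ ρ^k * δ := by
    intro k
    induction k with
    | zero => simpa using hδT1
    | succ n ih =>
      have hρnδ : ρ^n * δ ≤ δ := by
        nlinarith [pow_le_one₀ hρ0 hρle1 (n := n), hδ.le]
      have hpre : f (w (T1 + n)) - fstar ≤ δ := le_trans ih hρnδ
      have hstep' := hstepLoc (T1 + n) hpre
      have hΔn := hΔ0 (T1 + n)
      have hmax : (1 - μ/Ls) * (f (w (T1 + n)) - fstar) ≤ ρ * (f (w (T1 + n)) - fstar) :=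
        mul_le_mul_of_nonneg_right (le_max_right _ _) hΔn
      have : f (w (T1 + n + 1)) - fstar ≤ ρ * (ρ^n * δ) := by
        have := mul_le_mul_of_nonneg_left ih hρ0
        linarith [hstep', hmax, this]
      calc f (w (T1 + (n+1))) - fstar = f (w (T1 + n + 1)) - fstar := by ring_nf
        _ ≤ ρ * (ρ^n * δ) := this
        _ = ρ^(n+1) * δ := by ring
  -- conclude
  intro T hT
  have hTsum : T1 + T2 ≤ T := by omega
  obtain ⟨k, hk⟩ : ∃ k, T = T1 + k := ⟨T - T1, by omega⟩
  have hkT2 : T2 ≤ k := by omega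
  have h1 : f (w T) - fstar ≤ ρ^k * δ := by rw [hk]; exact hphase2 k
  have h2 : ρ^k ≤ ρ^T2 := pow_le_pow_of_le_one hρ0 hρle1 hkT2
  have h3 : ρ^T2 ≤ Real.exp (-(μ/Ls))^T2 := pow_le_pow_left₀ hρ0 hρe T2
  have h4 : Real.exp (-(μ/Ls))^T2 = Real.exp (-(μ/Ls) * T2) := by
    rw [← Real.exp_nat_mul]; ring_nf
  have h5 : -(μ/Ls) * T2 ≤ -Real.log (δ/ε) := by
    have h6 : Real.log (δ/ε) = μ/Ls * (Ls/μ * Real.log (δ/ε)) := by field_simp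
    have h7 : μ/Ls * a2 ≤ μ/Ls * T2 := mul_le_mul_of_nonneg_left haT2 (by positivity)
    rw [ha2] at h7
    linarith [h6.le, h6.ge, h7]
  have h8 : Real.exp (-Real.log (δ/ε)) = ε / δ := by
    rw [Real.exp_neg, Real.exp_log (by positivity), inv_div]
  have h9 : ρ^T2 ≤ ε/δ := by
    rw [← h8]
    exact le_trans h3 (by rw [h4]; exact Real.exp_le_exp.mpr h5)
  have h10 : ρ^k * δ ≤ (ε/δ) * δ :=
    mul_le_mul_of_nonneg_right (le_trans h2 h9) hδ.le
  have h11 : (ε/δ) * δ = ε := by field_simp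
  linarith
end

section
/- Let f : ℝ^d → ℝ be differentiable and glocally (L, L_*, δ)-smooth with infimum f_*. Suppose w_t ∈ ℝ^d satisfies f(w_t) − f_* ≤ δ, and d ∈ ℝ^d is a descent direction for f at w_t, i.e. ⟨∇f(w_t), d⟩ < 0. Then for any step size η_* ≥ 0 with η_*‖d‖² ≤ (1/L_*)|⟨∇f(w_t), d⟩|, the point w_t + η_* d satisfies f(w_t + η_* d) − f_* ≤ δ. -/
open scoped RealInnerProductSpace

/-- A descent step of size at most |⟨∇f(w_t), d⟩| / (L_* ‖d‖²) along a
descent direction d cannot leave the δ-sublevel set of a glocally (L, L_*, δ)-smooth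
function. -/
theorem descent_step_stays_in_sublevel {d : ℕ}
    (f : EuclideanSpace ℝ (Fin d) → ℝ)
    (f' : EuclideanSpace ℝ (Fin d) → EuclideanSpace ℝ (Fin d))
    (L Ls δ fstar : ℝ) (hL : 0 < L) (hLs : 0 < Ls)
    (hdiff : ∀ x, HasGradientAt f (f' x) x)
    (hfstar : IsGLB (Set.range f) fstar)
    (hglob : ∀ u v, ‖f' u - f' v‖ ≤ L * ‖u - v‖)
    (hloc : ∀ u v, f u - fstar ≤ δ → f v - fstar ≤ δ → ‖f' u - f' v‖ ≤ Ls * ‖u - v‖)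
    (wt dvec : EuclideanSpace ℝ (Fin d))
    (hwt : f wt - fstar ≤ δ)
    (hdesc : ⟪f' wt, dvec⟫ < 0)
    (ηs : ℝ) (hηs : 0 ≤ ηs)
    (hstep : ηs * ‖dvec‖ ^ 2 ≤ 1 / Ls * |⟪f' wt, dvec⟫|) :
    f (wt + ηs • dvec) - fstar ≤ δ := by
  by_cases hd0 : dvec = 0
  · simpa [hd0] using hwt
  set g : ℝ → ℝ := fun t => f (wt + t • dvec) with hgdef
  have hderiv : ∀ t : ℝ, HasDerivAt g ⟪f' (wt + t • dvec), dvec⟫ t := by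
    intro t
    have hc : HasDerivAt (fun t : ℝ => wt + t • dvec) dvec t := by
      simpa using ((hasDerivAt_id t).smul_const dvec).const_add wt
    have h2 := (hdiff (wt + t • dvec)).hasFDerivAt.comp_hasDerivAt t hc
    simp only [InnerProductSpace.toDual_apply_apply] at h2
    exact h2
  have hgcont : Continuous g :=
    continuous_iff_continuousAt.2 fun t => (hderiv t).continuousAt
  have hg0 : g 0 = f wt := by simp [hgdef]
  -- the "bad" set
  set B : Set ℝ := {t ∈ Set.Icc 0 ηs | g 0 < g t} with hBdef
  have hmain : g ηs ≤ g 0 := by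
    by_contra hcon
    push_neg at hcon
    have hηB : ηs ∈ B := ⟨⟨hηs, le_refl _⟩, hcon⟩
    have hBne : B.Nonempty := ⟨ηs, hηB⟩
    have hBbdd : BddBelow B := ⟨0, fun b hb => hb.1.1⟩
    set T : ℝ := sInf B with hTdef
    have hT0 : 0 ≤ T := le_csInf hBne fun b hb => hb.1.1
    have hTηs : T ≤ ηs := csInf_le hBbdd hηB
    -- for t < T (in Icc) we have g t ≤ g 0
    have hbelow : ∀ t, 0 ≤ t → t < T → g t ≤ g 0 := by
      intro t ht0 htT
      by_contra h
      push_neg at h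
      have : t ∈ B := ⟨⟨ht0, le_trans htT.le hTηs⟩, h⟩
      exact absurd (csInf_le hBbdd this) (not_le.2 htT)
    have hgT : g T ≤ g 0 := by
      rcases eq_or_lt_of_le hT0 with h0 | h0
      · rw [← h0]
      · have hcl : IsClosed {t : ℝ | g t ≤ g 0} :=
          isClosed_le (by exact hgcont) continuous_const
        have hsub : Set.Ico (0:ℝ) T ⊆ {t : ℝ | g t ≤ g 0} :=
          fun t ht => hbelow t ht.1 ht.2
        have : T ∈ closure (Set.Ico (0:ℝ) T) := by
          rw [closure_Ico (ne_of_lt h0)]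
          exact ⟨hT0, le_refl _⟩
        exact hcl.closure_subset (closure_mono hsub this)
    have hTnotB : T ∉ B := fun h => absurd hgT (not_le.2 h.2)
    have hTlt : T < ηs := lt_of_le_of_ne hTηs (fun h => hTnotB (h ▸ hηB))
    -- derivative at T is negative
    have hdn : ‖dvec‖ ^ 2 > 0 := pow_pos (norm_pos_iff.mpr hd0) 2
    have hLsstep : Ls * (ηs * ‖dvec‖ ^ 2) ≤ -⟪f' wt, dvec⟫ := by
      have := mul_le_mul_of_nonneg_left hstep (le_of_lt hLs)
      rw [abs_of_neg hdesc] at this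
      calc Ls * (ηs * ‖dvec‖ ^ 2) ≤ Ls * (1 / Ls * -⟪f' wt, dvec⟫) := this
        _ = -⟪f' wt, dvec⟫ := by field_simp
    have hfT : f (wt + T • dvec) - fstar ≤ δ := by
      have : g T ≤ g 0 := hgT
      rw [hg0] at this
      calc f (wt + T • dvec) - fstar = g T - fstar := rfl
        _ ≤ f wt - fstar := by linarith
        _ ≤ δ := hwt
    have hlip : ‖f' (wt + T • dvec) - f' wt‖ ≤ Ls * (T * ‖dvec‖) := by
      have := hloc (wt + T • dvec) wt hfT hwt
      have hnorm : ‖(wt + T • dvec) - wt‖ = T * ‖dvec‖ := by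
        rw [add_sub_cancel_left, norm_smul, Real.norm_eq_abs, abs_of_nonneg hT0]
      rwa [hnorm] at this
    have hderivT : ⟪f' (wt + T • dvec), dvec⟫ < 0 := by
      have h1 : ⟪f' (wt + T • dvec) - f' wt, dvec⟫ ≤ ‖f' (wt + T • dvec) - f' wt‖ * ‖dvec‖ :=
        real_inner_le_norm _ _
      have h2 : ⟪f' (wt + T • dvec) - f' wt, dvec⟫ ≤ Ls * (T * ‖dvec‖) * ‖dvec‖ :=
        h1.trans (mul_le_mul_of_nonneg_right hlip (norm_nonneg _))
      have h3 : ⟪f' (wt + T • dvec), dvec⟫ ≤ ⟪f' wt, dvec⟫ + Ls * (T * ‖dvec‖ ^ 2) := by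
        rw [inner_sub_left] at h2
        nlinarith [h2]
      have h4 : Ls * (T * ‖dvec‖ ^ 2) < Ls * (ηs * ‖dvec‖ ^ 2) := by
        apply mul_lt_mul_of_pos_left _ hLs
        exact mul_lt_mul_of_pos_right hTlt hdn
      linarith
    -- points just above T have g t < g T
    have htend : Filter.Tendsto (slope g T) (nhdsWithin T {T}ᶜ)
        (nhds ⟪f' (wt + T • dvec), dvec⟫) :=
      hasDerivAt_iff_tendsto_slope.1 (hderiv T)
    have htend' : Filter.Tendsto (slope g T) (nhdsWithin T (Set.Ioi T))
        (nhds ⟪f' (wt + T • dvec), dvec⟫) :=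
      htend.mono_left (nhdsWithin_mono _ fun x hx => ne_of_gt hx)
    have hev : ∀ᶠ t in nhdsWithin T (Set.Ioi T), slope g T t < 0 :=
      htend' (Iio_mem_nhds hderivT)
    rw [eventually_nhdsWithin_iff] at hev
    rcases Metric.eventually_nhds_iff.1 hev with ⟨ε, hε, hball⟩
    -- derive contradiction: sInf B ≥ T + something
    have hlb : ∀ b ∈ B, T + min ε (ηs - T) ≤ b := by
      intro b hb
      by_contra hblt
      push_neg at hblt
      have hbT : T ≤ b := csInf_le hBbdd hb
      have hbT' : T < b := lt_of_le_of_ne hbT (fun h => hTnotB (h ▸ hb))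
      have hdist : dist b T < ε := by
        rw [Real.dist_eq, abs_of_pos (sub_pos.2 hbT')]
        have := lt_of_lt_of_le hblt (by linarith [min_le_left ε (ηs - T)] : T + min ε (ηs - T) ≤ T + ε)
        linarith
      have hsl : slope g T b < 0 := hball hdist (Set.mem_Ioi.2 hbT')
      rw [slope_def_field, div_neg_iff] at hsl
      have hgb : g b < g T := by
        rcases hsl with ⟨h1, h2⟩ | ⟨h1, h2⟩
        · linarith
        · linarith [sub_pos.2 hbT']
      exact absurd hb.2 (not_lt.2 (hgb.le.trans hgT))
    have hεmin : 0 < min ε (ηs - T) := lt_min hε (sub_pos.2 hTlt)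
    have : T + min ε (ηs - T) ≤ T := le_csInf hBne hlb
    linarith
  have : g ηs ≤ f wt := hg0 ▸ hmain
  calc f (wt + ηs • dvec) - fstar = g ηs - fstar := rfl
    _ ≤ f wt - fstar := by linarith
    _ ≤ δ := hwt
end

section
/- Let f : ℝ^d → ℝ be differentiable and glocally (L, L_*, δ)-smooth with infimum f_*, and let w_t ∈ ℝ^d satisfy f(w_t) − f_* ≤ δ. Then: (i) the gradient-descent step w_{t+1} = w_t − (1/L_*)∇f(w_t) satisfies f(w_{t+1}) − f_* ≤ δ; and (ii) if instead w_{t+1} = w_t − η_t∇f(w_t) with η_t chosen by exact line optimization, then f(w_{t+1}) ≤ f(w_t) − (1/(2L_*))‖∇f(w_t)‖². -/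
open scoped RealInnerProductSpace

theorem aux_deriv {d : ℕ} (f : EuclideanSpace ℝ (Fin d) → ℝ)
    (f' : EuclideanSpace ℝ (Fin d) → EuclideanSpace ℝ (Fin d))
    (hdiff : ∀ x, HasGradientAt f (f' x) x)
    (x v : EuclideanSpace ℝ (Fin d)) (t : ℝ) :
    HasDerivAt (fun s : ℝ => f (x + s • v)) ⟪f' (x + t • v), v⟫ t := by
  have h1 : HasDerivAt (fun s : ℝ => x + s • v) v t := by
    simpa using ((hasDerivAt_id t).smul_const v).const_add x
  have h2 := (hdiff (x + t • v)).hasFDerivAt.comp_hasDerivAt t h1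
  simp at h2
  exact h2

theorem aux_descent {d : ℕ} (f : EuclideanSpace ℝ (Fin d) → ℝ)
    (f' : EuclideanSpace ℝ (Fin d) → EuclideanSpace ℝ (Fin d))
    (hdiff : ∀ x, HasGradientAt f (f' x) x)
    (x v : EuclideanSpace ℝ (Fin d)) (C T : ℝ) (hT : 0 ≤ T)
    (hlip : ∀ s ∈ Set.Icc (0:ℝ) T, ‖f' (x + s • v) - f' x‖ ≤ C * s * ‖v‖) :
    f (x + T • v) ≤ f x + T * ⟪f' x, v⟫ + C / 2 * T ^ 2 * ‖v‖ ^ 2 := by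
  set h : ℝ → ℝ := fun s => f (x + s • v) - s * ⟪f' x, v⟫ - C / 2 * s ^ 2 * ‖v‖ ^ 2 with hh
  have hd : ∀ s : ℝ, HasDerivAt h
      (⟪f' (x + s • v), v⟫ - ⟪f' x, v⟫ - C * s * ‖v‖ ^ 2) s := by
    intro s
    have d1 := aux_deriv f f' hdiff x v s
    have d2 : HasDerivAt (fun s : ℝ => s * ⟪f' x, v⟫) ⟪f' x, v⟫ s := by
      simpa using (hasDerivAt_id s).mul_const ⟪f' x, v⟫
    have d3 : HasDerivAt (fun s : ℝ => C / 2 * s ^ 2 * ‖v‖ ^ 2) (C * s * ‖v‖ ^ 2) s := by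
      have h4 : HasDerivAt (fun s : ℝ => C / 2 * s ^ 2 * ‖v‖ ^ 2)
          (C / 2 * (↑2 * s ^ 1) * ‖v‖ ^ 2) s :=
        ((hasDerivAt_pow 2 s).const_mul (C / 2)).mul_const (‖v‖ ^ 2)
      convert h4 using 1; ring
    exact (d1.sub d2).sub d3
  have hanti : AntitoneOn h (Set.Icc 0 T) := by
    apply antitoneOn_of_deriv_nonpos (convex_Icc 0 T)
    · exact fun s _ => ((hd s).continuousAt).continuousWithinAt
    · exact fun s _ => ((hd s).differentiableAt).differentiableWithinAt
    · intro s hs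
      rw [interior_Icc] at hs
      rw [(hd s).deriv]
      have h1 : ⟪f' (x + s • v) - f' x, v⟫ ≤ ‖f' (x + s • v) - f' x‖ * ‖v‖ :=
        real_inner_le_norm _ _
      have h2 := hlip s ⟨le_of_lt hs.1, le_of_lt hs.2⟩
      have h3 : ‖f' (x + s • v) - f' x‖ * ‖v‖ ≤ C * s * ‖v‖ * ‖v‖ :=
        mul_le_mul_of_nonneg_right h2 (norm_nonneg v)
      rw [inner_sub_left] at h1
      nlinarith [sq_nonneg ‖v‖]
  have key := hanti (Set.left_mem_Icc.2 hT) (Set.right_mem_Icc.2 hT) hT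
  have h0 : h 0 = f x := by simp [hh]
  have hTv : h T = f (x + T • v) - T * ⟪f' x, v⟫ - C / 2 * T ^ 2 * ‖v‖ ^ 2 := rfl
  rw [h0, hTv] at key
  linarith

/-- Inside the δ-sublevel set of a glocally (L, L_*, δ)-smooth function:
(i) a gradient step of size 1/L_* stays in the sublevel set; (ii) an exact-line-optimization
gradient step decreases f by at least ‖∇f(w_t)‖²/(2L_*). -/
theorem sublevel_gd_progress {d : ℕ}
    (f : EuclideanSpace ℝ (Fin d) → ℝ)
    (f' : EuclideanSpace ℝ (Fin d) → EuclideanSpace ℝ (Fin d))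
    (L Ls δ fstar : ℝ) (hL : 0 < L) (hLs : 0 < Ls)
    (hdiff : ∀ x, HasGradientAt f (f' x) x)
    (hfstar : IsGLB (Set.range f) fstar)
    (hglob : ∀ u v, ‖f' u - f' v‖ ≤ L * ‖u - v‖)
    (hloc : ∀ u v, f u - fstar ≤ δ → f v - fstar ≤ δ → ‖f' u - f' v‖ ≤ Ls * ‖u - v‖)
    (wt : EuclideanSpace ℝ (Fin d))
    (hwt : f wt - fstar ≤ δ) :
    (f (wt - (1 / Ls) • f' wt) - fstar ≤ δ) ∧
    (∀ wnext : EuclideanSpace ℝ (Fin d),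
      (∃ η : ℝ, wnext = wt - η • f' wt) →
      (∀ η : ℝ, f wnext ≤ f (wt - η • f' wt)) →
      f wnext ≤ f wt - 1 / (2 * Ls) * ‖f' wt‖ ^ 2) := by
  set g := f' wt with hg
  set v : EuclideanSpace ℝ (Fin d) := -g with hv
  have hnv : ‖v‖ = ‖g‖ := norm_neg g
  have hinner : ⟪g, v⟫ = -‖g‖ ^ 2 := by
    rw [hv, inner_neg_right, real_inner_self_eq_norm_sq]
  set H : ℝ := 1 / Ls with hH
  have hH0 : 0 ≤ H := by positivity
  set L' : ℝ := max L Ls with hL'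
  have hL'0 : 0 < L' := lt_of_lt_of_le hL (le_max_left _ _)
  set ε : ℝ := 1 / (2 * L') with hε
  have hε0 : 0 < ε := by positivity
  have hrw : ∀ c : ℝ, wt - c • g = wt + c • v := by
    intro c; rw [hv, smul_neg, sub_eq_add_neg]
  -- norm of step
  have hstep : ∀ (x : EuclideanSpace ℝ (Fin d)) (u : ℝ), 0 ≤ u →
      ‖x + u • v - x‖ = u * ‖g‖ := by
    intro x u hu
    rw [add_sub_cancel_left, norm_smul, hnv, Real.norm_eq_abs, abs_of_nonneg hu]
  -- main induction
  have key : ∀ n : ℕ, ∀ s : ℝ, 0 ≤ s → s ≤ H → s ≤ n * ε → f (wt + s • v) ≤ f wt := by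
    intro n
    induction n with
    | zero =>
      intro s hs0 _ hsn
      have : s = 0 := le_antisymm (by simpa using hsn) hs0
      simp [this]
    | succ n ih =>
      intro s hs0 hsH hsn
      by_cases hcase : s ≤ n * ε
      · exact ih s hs0 hsH hcase
      push_neg at hcase
      set a : ℝ := n * ε with ha
      have ha0 : 0 ≤ a := by positivity
      have haH : a ≤ H := le_trans (le_of_lt hcase) hsH
      have hsub : ∀ u : ℝ, 0 ≤ u → u ≤ a → f (wt + u • v) - fstar ≤ δ := by
        intro u h1 h2
        have := ih u h1 (le_trans h2 haH) h2
        linarith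
      -- descent on [0, a] with constant Ls
      have D1 : f (wt + a • v) ≤ f wt + a * ⟪g, v⟫ + Ls / 2 * a ^ 2 * ‖v‖ ^ 2 := by
        apply aux_descent f f' hdiff wt v Ls a ha0
        intro u hu
        have h5 := hloc (wt + u • v) wt (hsub u hu.1 hu.2) hwt
        rw [hstep wt u hu.1] at h5
        rw [hnv, mul_assoc]
        exact h5
      -- gradient bound at a
      have hga : ‖f' (wt + a • v) - g‖ ≤ Ls * a * ‖g‖ := by
        have h5 := hloc (wt + a • v) wt (hsub a ha0 le_rfl) hwt
        rw [hstep wt a ha0] at h5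
        rw [mul_assoc]; exact h5
      have hinner2 : ⟪f' (wt + a • v), v⟫ ≤ -‖g‖ ^ 2 + Ls * a * ‖g‖ ^ 2 := by
        have h6 : ⟪f' (wt + a • v) - g, v⟫ ≤ ‖f' (wt + a • v) - g‖ * ‖v‖ :=
          real_inner_le_norm _ _
        have h7 : ‖f' (wt + a • v) - g‖ * ‖v‖ ≤ Ls * a * ‖g‖ * ‖g‖ := by
          rw [hnv]; exact mul_le_mul_of_nonneg_right hga (norm_nonneg g)
        rw [inner_sub_left, hinner] at h6
        nlinarith [sq_nonneg ‖g‖]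
      -- descent on [a, s] with constant L'
      have hea : wt + a • v + (s - a) • v = wt + s • v := by
        rw [add_assoc, ← add_smul]; ring_nf
      have D2 : f (wt + s • v) ≤ f (wt + a • v) + (s - a) * ⟪f' (wt + a • v), v⟫
          + L' / 2 * (s - a) ^ 2 * ‖v‖ ^ 2 := by
        have := aux_descent f f' hdiff (wt + a • v) v L' (s - a)
          (by linarith) ?_
        · rwa [hea] at this
        intro u hu
        have h8 := hglob (wt + a • v + u • v) (wt + a • v)
        rw [hstep (wt + a • v) u hu.1] at h8
        rw [hnv]
        calc ‖f' (wt + a • v + u • v) - f' (wt + a • v)‖ ≤ L * (u * ‖g‖) := h8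
          _ ≤ L' * u * ‖g‖ := by
              rw [← mul_assoc]
              exact mul_le_mul_of_nonneg_right
                (mul_le_mul_of_nonneg_right (le_max_left L Ls) hu.1) (norm_nonneg g)
      -- combine
      have hcancel : L' * (1 / (2 * L')) = 1 / 2 := by field_simp
      have he1 : s - a ≤ ε := by
        rw [ha]; push_cast at hsn; rw [hε] at hsn ⊢; linarith
      have hLsa : Ls * a ≤ 1 := by
        calc Ls * a ≤ Ls * H := mul_le_mul_of_nonneg_left haH (le_of_lt hLs)
          _ = 1 := by rw [hH]; field_simp
      have hLsL' : Ls ≤ L' := le_max_right L Ls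
      have hE0 : (0:ℝ) ≤ s - a := by linarith
      have hL'e : L' * (s - a) ≤ 1 / 2 := by
        have h10 : L' * (s - a) ≤ L' * ε := mul_le_mul_of_nonneg_left he1 (le_of_lt hL'0)
        rw [hε] at h10; linarith [hcancel]
      have hLse : Ls * (s - a) ≤ 1 / 2 := by
        have : Ls * (s - a) ≤ L' * (s - a) := mul_le_mul_of_nonneg_right hLsL' hE0
        linarith
      have hG : (0:ℝ) ≤ ‖g‖ ^ 2 := sq_nonneg _
      have t1 : Ls * a ^ 2 ≤ a := by
        calc Ls * a ^ 2 = (Ls * a) * a := by ring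
          _ ≤ 1 * a := mul_le_mul_of_nonneg_right hLsa ha0
          _ = a := one_mul a
      have t2 : L' * (s - a) ^ 2 ≤ (s - a) / 2 := by
        calc L' * (s - a) ^ 2 = (L' * (s - a)) * (s - a) := by ring
          _ ≤ (1 / 2) * (s - a) := mul_le_mul_of_nonneg_right hL'e hE0
          _ = (s - a) / 2 := by ring
      have t3 : 2 * ((s - a) * (Ls * a)) ≤ a := by
        calc 2 * ((s - a) * (Ls * a)) = (Ls * (s - a)) * (2 * a) := by ring
          _ ≤ (1 / 2) * (2 * a) := mul_le_mul_of_nonneg_right hLse (by linarith)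
          _ = a := by ring
      have m1 : Ls * a ^ 2 * ‖g‖ ^ 2 ≤ a * ‖g‖ ^ 2 := mul_le_mul_of_nonneg_right t1 hG
      have m2 : L' * (s - a) ^ 2 * ‖g‖ ^ 2 ≤ (s - a) / 2 * ‖g‖ ^ 2 :=
        mul_le_mul_of_nonneg_right t2 hG
      have m3 : 2 * ((s - a) * (Ls * a)) * ‖g‖ ^ 2 ≤ a * ‖g‖ ^ 2 :=
        mul_le_mul_of_nonneg_right t3 hG
      have hEI : (s - a) * ⟪f' (wt + a • v), v⟫ ≤
          (s - a) * (-‖g‖ ^ 2 + Ls * a * ‖g‖ ^ 2) :=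
        mul_le_mul_of_nonneg_left hinner2 hE0
      rw [hinner, hnv] at D1
      rw [hnv] at D2
      linarith [D1, D2, hEI, m1, m2, m3, mul_nonneg hE0 hG]
  -- conclude: sublevel on [0, H]
  obtain ⟨n, hn⟩ := exists_nat_ge (H / ε)
  have hHn : H ≤ n * ε := by
    rw [div_le_iff₀ hε0] at hn; exact hn
  have hsubH : ∀ u : ℝ, 0 ≤ u → u ≤ H → f (wt + u • v) - fstar ≤ δ := by
    intro u h1 h2
    have := key n u h1 h2 (le_trans h2 hHn)
    linarith
  have Dfin : f (wt + H • v) ≤ f wt + H * ⟪g, v⟫ + Ls / 2 * H ^ 2 * ‖v‖ ^ 2 := by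
    apply aux_descent f f' hdiff wt v Ls H hH0
    intro u hu
    have h5 := hloc (wt + u • v) wt (hsubH u hu.1 hu.2) hwt
    rw [hstep wt u hu.1] at h5
    rw [hnv, mul_assoc]
    exact h5
  rw [hinner, hnv] at Dfin
  have hmain : f (wt + H • v) ≤ f wt - 1 / (2 * Ls) * ‖g‖ ^ 2 := by
    have harith : H * -‖g‖ ^ 2 + Ls / 2 * H ^ 2 * ‖g‖ ^ 2 = -(1 / (2 * Ls) * ‖g‖ ^ 2) := by
      rw [hH]; field_simp; ring
    linarith [Dfin, harith]
  constructor
  · rw [hrw H]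
    have h0 : 0 ≤ 1 / (2 * Ls) * ‖g‖ ^ 2 := by positivity
    linarith
  · intro wnext _ hopt
    have hle := hopt (1 / Ls)
    rw [hrw (1 / Ls), ← hH] at hle
    linarith
end

section
/- Let f : ℝ^d → ℝ be differentiable, glocally (L, L_*, δ)-smooth, and μ-strongly convex with minimum value f_*. Let 0 < α ≤ 1/2 and 0 < β < 1, let w₀ ∈ ℝ^d with Δ₀ = f(w₀) − f_* and Δ₀ > δ > ε > 0. Let (w_t) satisfy w_t = w_{t-1} − η_{t-1}∇f(w_{t-1}) where each step size η_{t-1} > 0 satisfies the Armijo condition f(w_t) ≤ f(w_{t-1}) − α η_{t-1}‖∇f(w_{t-1})‖², satisfies η_{t-1} ≥ β/L, and additionally satisfies η_{t-1} ≥ β/L_* whenever f(w_{t-1}) − f_* ≤ δ (these lower bounds are what a forwardtracking–backtracking line search with backtracking factor β guarantees). Then f(w_T) − f_* ≤ ε for every natural number T with T ≥ ⌈(L/(2βαμ))log(Δ₀/δ)⌉ + ⌈(L_*/(2βαμ))log(δ/ε)⌉. -/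
open scoped RealInnerProductSpace

/-- Iteration complexity of gradient descent with a
forwardtracking–backtracking Armijo line search under glocal (L, L_*, δ)-smoothness
and μ-strong convexity. -/
theorem gd_armijo_forwardtracking_glocal_complexity {d : ℕ}
    (f : EuclideanSpace ℝ (Fin d) → ℝ)
    (f' : EuclideanSpace ℝ (Fin d) → EuclideanSpace ℝ (Fin d))
    (L Ls δ ε μ α β : ℝ)
    (hL : 0 < L) (hLs : 0 < Ls) (hμ : 0 < μ)
    (hα : 0 < α) (hα' : α ≤ 1 / 2) (hβ : 0 < β) (hβ' : β < 1)
    (fstar : ℝ)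
    (hdiff : ∀ x, HasGradientAt f (f' x) x)
    (hglob : ∀ u v, ‖f' u - f' v‖ ≤ L * ‖u - v‖)
    (hloc : ∀ u v, f u - fstar ≤ δ → f v - fstar ≤ δ → ‖f' u - f' v‖ ≤ Ls * ‖u - v‖)
    (hsc : ∀ u v, f v ≥ f u + ⟪f' u, v - u⟫ + μ / 2 * ‖v - u‖ ^ 2)
    (hmin : ∃ wstar, f wstar = fstar ∧ ∀ x, fstar ≤ f x)
    (w : ℕ → EuclideanSpace ℝ (Fin d))
    (hΔδ : f (w 0) - fstar > δ) (hδε : δ > ε) (hε : ε > 0)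
    (hstep : ∀ t : ℕ, ∃ η : ℝ, 0 < η ∧
      w (t + 1) = w t - η • f' (w t) ∧
      f (w (t + 1)) ≤ f (w t) - α * η * ‖f' (w t)‖ ^ 2 ∧
      β / L ≤ η ∧
      (f (w t) - fstar ≤ δ → β / Ls ≤ η)) :
    ∀ T : ℕ,
      (⌈L / (2 * β * α * μ) * Real.log ((f (w 0) - fstar) / δ)⌉ +
        ⌈Ls / (2 * β * α * μ) * Real.log (δ / ε)⌉ : ℤ) ≤ T →
      f (w T) - fstar ≤ ε := by
  obtain ⟨wstar, hws, hlb⟩ := hmin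
  obtain ⟨Δ, hΔeq⟩ : ∃ D : ℕ → ℝ, ∀ t, D t = f (w t) - fstar := ⟨_, fun _ => rfl⟩
  have hδpos : 0 < δ := hε.trans hδε
  have hΔnn : ∀ t, 0 ≤ Δ t := fun t => by rw [hΔeq]; exact sub_nonneg.mpr (hlb _)
  have hΔ0δ : δ < Δ 0 := by rw [hΔeq]; exact hΔδ
  have hΔ0pos : 0 < Δ 0 := hδpos.trans hΔ0δ
  -- PL inequality
  have hPL : ∀ u, 2 * μ * (f u - fstar) ≤ ‖f' u‖ ^ 2 := by
    intro u
    have h := hsc u wstar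
    rw [hws] at h
    have hCS : |⟪f' u, wstar - u⟫| ≤ ‖f' u‖ * ‖wstar - u‖ := abs_real_inner_le_norm _ _
    have hCS' : -(‖f' u‖ * ‖wstar - u‖) ≤ ⟪f' u, wstar - u⟫ := neg_le_of_abs_le hCS
    nlinarith [sq_nonneg (‖f' u‖ - μ * ‖wstar - u‖), hμ, norm_nonneg (wstar - u),
      norm_nonneg (f' u)]
  -- generic one-step contraction
  have key : ∀ (M : ℝ), 0 < M → ∀ (t : ℕ) (η : ℝ), 0 < η →
      f (w (t + 1)) ≤ f (w t) - α * η * ‖f' (w t)‖ ^ 2 → β / M ≤ η →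
      Δ (t + 1) ≤ Real.exp (-(2 * α * β * μ / M)) * Δ t := by
    intro M hM t η hη harm hηM
    have h1 : Δ (t + 1) ≤ Δ t - α * η * ‖f' (w t)‖ ^ 2 := by
      rw [hΔeq, hΔeq]; linarith
    have hPLt : 2 * μ * Δ t ≤ ‖f' (w t)‖ ^ 2 := by rw [hΔeq]; exact hPL (w t)
    have h2 : α * η * (2 * μ * Δ t) ≤ α * η * ‖f' (w t)‖ ^ 2 :=
      mul_le_mul_of_nonneg_left hPLt (by positivity)
    have h3 : (β / M) * (2 * α * μ * Δ t) ≤ η * (2 * α * μ * Δ t) :=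
      mul_le_mul_of_nonneg_right hηM (mul_nonneg (by positivity) (hΔnn t))
    have h4 : (1 - 2 * α * β * μ / M) * Δ t ≤ Real.exp (-(2 * α * β * μ / M)) * Δ t := by
      have := Real.add_one_le_exp (-(2 * α * β * μ / M))
      exact mul_le_mul_of_nonneg_right (by linarith) (hΔnn t)
    have heq : (β / M) * (2 * α * μ * Δ t) = (2 * α * β * μ / M) * Δ t := by ring
    have h5 : Δ (t + 1) ≤ Δ t - (2 * α * β * μ / M) * Δ t := by linarith
    linarith
  have stepA : ∀ t, Δ (t + 1) ≤ Real.exp (-(2 * α * β * μ / L)) * Δ t := by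
    intro t
    obtain ⟨η, hη, -, harm, hηL, -⟩ := hstep t
    exact key L hL t η hη harm hηL
  have stepB : ∀ t, Δ t ≤ δ → Δ (t + 1) ≤ Real.exp (-(2 * α * β * μ / Ls)) * Δ t := by
    intro t ht
    obtain ⟨η, hη, -, harm, -, hηLs⟩ := hstep t
    refine key Ls hLs t η hη harm (hηLs ?_)
    rw [← hΔeq]; exact ht
  set c1 : ℝ := 2 * α * β * μ / L with hc1
  set c2 : ℝ := 2 * α * β * μ / Ls with hc2
  have hc1pos : 0 < c1 := by rw [hc1]; positivity
  have hc2pos : 0 < c2 := by rw [hc2]; positivity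
  set K1 : ℝ := L / (2 * β * α * μ) with hK1
  set K2 : ℝ := Ls / (2 * β * α * μ) with hK2
  have hK1c1 : c1 * K1 = 1 := by
    rw [hc1, hK1]; field_simp
  have hK2c2 : c2 * K2 = 1 := by
    rw [hc2, hK2]; field_simp
  have hK1pos : 0 < K1 := by rw [hK1]; positivity
  have hK2pos : 0 < K2 := by rw [hK2]; positivity
  have hD0 : f (w 0) - fstar = Δ 0 := (hΔeq 0).symm
  have r1pos : 0 < Real.log ((f (w 0) - fstar) / δ) := by
    rw [hD0]
    exact Real.log_pos (by rw [lt_div_iff₀ hδpos]; linarith)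
  have r2pos : 0 < Real.log (δ / ε) :=
    Real.log_pos (by rw [lt_div_iff₀ hε]; linarith)
  set T1 : ℤ := ⌈K1 * Real.log ((f (w 0) - fstar) / δ)⌉ with hT1
  set T2 : ℤ := ⌈K2 * Real.log (δ / ε)⌉ with hT2
  have hT1nn : 0 ≤ T1 := Int.ceil_nonneg (by positivity)
  have hT2nn : 0 ≤ T2 := Int.ceil_nonneg (by positivity)
  -- decay in phase 1
  have decay1 : ∀ n : ℕ, Δ n ≤ Real.exp (-(c1 * n)) * Δ 0 := by
    intro n
    induction n with
    | zero => simp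
    | succ n ih =>
      calc Δ (n + 1) ≤ Real.exp (-c1) * Δ n := stepA n
        _ ≤ Real.exp (-c1) * (Real.exp (-(c1 * n)) * Δ 0) :=
            mul_le_mul_of_nonneg_left ih (Real.exp_pos _).le
        _ = Real.exp (-(c1 * ((n : ℕ) + 1 : ℕ))) * Δ 0 := by
            rw [← mul_assoc, ← Real.exp_add]; push_cast; ring_nf
  have phase1 : ∀ n : ℕ, (T1 : ℤ) ≤ n → Δ n ≤ δ := by
    intro n hn
    have hn' : (T1 : ℝ) ≤ n := by exact_mod_cast hn
    have hceil : K1 * Real.log ((f (w 0) - fstar) / δ) ≤ (T1 : ℝ) := Int.le_ceil _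
    have hlog : Real.log (Δ 0 / δ) ≤ c1 * n := by
      have h := mul_le_mul_of_nonneg_left (hceil.trans hn') hc1pos.le
      rw [hD0] at h
      calc Real.log (Δ 0 / δ) = c1 * K1 * Real.log (Δ 0 / δ) := by rw [hK1c1]; ring
        _ ≤ c1 * n := by linarith
    have hexp : Δ 0 / δ ≤ Real.exp (c1 * n) := by
      have h := Real.exp_le_exp.mpr hlog
      calc Δ 0 / δ = Real.exp (Real.log (Δ 0 / δ)) :=
            (Real.exp_log (by positivity)).symm
        _ ≤ Real.exp (c1 * n) := h
    have hΔ0le : Δ 0 ≤ Real.exp (c1 * n) * δ := by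
      rw [div_le_iff₀ hδpos] at hexp; linarith
    calc Δ n ≤ Real.exp (-(c1 * n)) * Δ 0 := decay1 n
      _ ≤ Real.exp (-(c1 * n)) * (Real.exp (c1 * n) * δ) :=
          mul_le_mul_of_nonneg_left hΔ0le (Real.exp_pos _).le
      _ = δ := by rw [← mul_assoc, ← Real.exp_add]; simp
  set T1n : ℕ := T1.toNat with hT1n
  have hT1cast : (T1 : ℤ) = (T1n : ℤ) := (Int.toNat_of_nonneg hT1nn).symm
  have phase2 : ∀ m : ℕ, Δ (T1n + m) ≤ Real.exp (-(c2 * m)) * δ := by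
    intro m
    induction m with
    | zero => simpa using phase1 T1n (le_of_eq hT1cast)
    | succ m ih =>
      have hle : Δ (T1n + m) ≤ δ := by
        have h1 : Real.exp (-(c2 * m)) ≤ 1 :=
          Real.exp_le_one_iff.mpr (neg_nonpos.mpr (by positivity))
        calc Δ (T1n + m) ≤ Real.exp (-(c2 * m)) * δ := ih
          _ ≤ 1 * δ := mul_le_mul_of_nonneg_right h1 hδpos.le
          _ = δ := one_mul δ
      calc Δ (T1n + (m + 1)) = Δ ((T1n + m) + 1) := by rw [Nat.add_succ]
        _ ≤ Real.exp (-c2) * Δ (T1n + m) := stepB _ hle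
        _ ≤ Real.exp (-c2) * (Real.exp (-(c2 * m)) * δ) :=
            mul_le_mul_of_nonneg_left ih (Real.exp_pos _).le
        _ = Real.exp (-(c2 * ((m : ℕ) + 1 : ℕ))) * δ := by
            rw [← mul_assoc, ← Real.exp_add]; push_cast; ring_nf
  intro T hT
  have hTge : T1n ≤ T := by
    have h : (T1n : ℤ) ≤ T := by omega
    exact_mod_cast h
  obtain ⟨m, hm⟩ : ∃ m : ℕ, T = T1n + m := ⟨T - T1n, by omega⟩
  have hmge : (T2 : ℝ) ≤ m := by
    have h : (T2 : ℤ) ≤ (m : ℤ) := by omega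
    exact_mod_cast h
  have hceil : K2 * Real.log (δ / ε) ≤ (T2 : ℝ) := Int.le_ceil _
  have hlog : Real.log (δ / ε) ≤ c2 * m := by
    have h := mul_le_mul_of_nonneg_left (hceil.trans hmge) hc2pos.le
    calc Real.log (δ / ε) = c2 * K2 * Real.log (δ / ε) := by rw [hK2c2]; ring
      _ ≤ c2 * m := by linarith
  have hexp : δ / ε ≤ Real.exp (c2 * m) := by
    have h := Real.exp_le_exp.mpr hlog
    calc δ / ε = Real.exp (Real.log (δ / ε)) := (Real.exp_log (by positivity)).symm
      _ ≤ Real.exp (c2 * m) := h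
  have hδε' : δ ≤ Real.exp (c2 * m) * ε := by
    rw [div_le_iff₀ hε] at hexp; linarith
  have final : Δ T ≤ ε := by
    rw [hm]
    calc Δ (T1n + m) ≤ Real.exp (-(c2 * m)) * δ := phase2 m
      _ ≤ Real.exp (-(c2 * m)) * (Real.exp (c2 * m) * ε) :=
          mul_le_mul_of_nonneg_left hδε' (Real.exp_pos _).le
      _ = ε := by rw [← mul_assoc, ← Real.exp_add]; simp
  rw [← hΔeq T]
  exact final
end

section
/- Let f : ℝ^d → ℝ be differentiable, glocally (L, L_*, δ)-smooth, globally μ-strongly convex, and additionally μ_*-strongly convex on the sublevel set {w : f(w) − f_* ≤ δ} (i.e. f(v) ≥ f(u) + ⟨∇f(u), v − u⟩ + (μ_*/2)‖v − u‖² for all u, v in this set). Assume Δ₀ = f(w₀) − f_* > δ > ε > 0 and let (w_t) be gradient-descent iterates w_{t+1} = w_t − η_t∇f(w_t) with each η_t chosen by exact line optimization. Then f(w_T) − f_* ≤ ε for every natural number T with T ≥ ⌈(L/μ)log(Δ₀/δ)⌉ + ⌈(L_*/μ_*)log(δ/ε)⌉. -/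
open scoped RealInnerProductSpace

lemma curve_deriv {d : ℕ} (f : EuclideanSpace ℝ (Fin d) → ℝ)
    (f' : EuclideanSpace ℝ (Fin d) → EuclideanSpace ℝ (Fin d))
    (hdiff : ∀ y, HasGradientAt f (f' y) y)
    (x v : EuclideanSpace ℝ (Fin d)) (t : ℝ) :
    HasDerivAt (fun u : ℝ => f (x + u • v)) ⟪f' (x + t • v), v⟫ t := by
  have hc : HasDerivAt (fun u : ℝ => x + u • v) v t := by
    simpa using ((hasDerivAt_id t).smul_const v).const_add x
  have hf := (hdiff (x + t • v)).hasFDerivAt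
  have := hf.comp_hasDerivAt t hc
  simpa [Function.comp_def] using this

lemma descent_aux {d : ℕ} (f : EuclideanSpace ℝ (Fin d) → ℝ)
    (f' : EuclideanSpace ℝ (Fin d) → EuclideanSpace ℝ (Fin d))
    (hdiff : ∀ y, HasGradientAt f (f' y) y) (hcont : Continuous f')
    (x v : EuclideanSpace ℝ (Fin d)) (C s : ℝ) (hs : 0 ≤ s)
    (hLip : ∀ t ∈ Set.Icc 0 s, ‖f' (x + t • v) - f' x‖ ≤ C * t * ‖v‖) :
    f (x + s • v) ≤ f x + s * ⟪f' x, v⟫ + C * s ^ 2 / 2 * ‖v‖ ^ 2 := by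
  have hψ : ∀ t : ℝ, HasDerivAt (fun u : ℝ => f (x + u • v)) ⟪f' (x + t • v), v⟫ t :=
    fun t => curve_deriv f f' hdiff x v t
  have hcont' : Continuous fun t : ℝ => ⟪f' (x + t • v), v⟫ := by
    apply Continuous.inner
    · exact hcont.comp (by continuity)
    · exact continuous_const
  have hint1 : IntervalIntegrable (fun t : ℝ => ⟪f' (x + t • v), v⟫)
      MeasureTheory.volume 0 s := hcont'.intervalIntegrable _ _
  have hint2 : IntervalIntegrable (fun t : ℝ => ⟪f' x, v⟫ + C * ‖v‖ ^ 2 * t)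
      MeasureTheory.volume 0 s := (by continuity : Continuous fun t : ℝ => ⟪f' x, v⟫ + C * ‖v‖ ^ 2 * t).intervalIntegrable _ _
  have key : f (x + s • v) - f (x + (0:ℝ) • v) = ∫ t in (0:ℝ)..s, ⟪f' (x + t • v), v⟫ :=
    (intervalIntegral.integral_eq_sub_of_hasDerivAt (fun t _ => hψ t) hint1).symm
  have hmono : (∫ t in (0:ℝ)..s, ⟪f' (x + t • v), v⟫)
      ≤ ∫ t in (0:ℝ)..s, (⟪f' x, v⟫ + C * ‖v‖ ^ 2 * t) := by
    apply intervalIntegral.integral_mono_on hs hint1 hint2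
    intro t ht
    have h1 : ⟪f' (x + t • v), v⟫ - ⟪f' x, v⟫ = ⟪f' (x + t • v) - f' x, v⟫ := by
      rw [inner_sub_left]
    have h2 : ⟪f' (x + t • v) - f' x, v⟫ ≤ ‖f' (x + t • v) - f' x‖ * ‖v‖ :=
      real_inner_le_norm _ _
    have h3 := hLip t ht
    nlinarith [norm_nonneg v, mul_le_mul_of_nonneg_right h3 (norm_nonneg v)]
  have hval : (∫ t in (0:ℝ)..s, (⟪f' x, v⟫ + C * ‖v‖ ^ 2 * t))
      = s * ⟪f' x, v⟫ + C * s ^ 2 / 2 * ‖v‖ ^ 2 := by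
    rw [intervalIntegral.integral_add (intervalIntegrable_const)
      ((show Continuous fun t : ℝ => C * ‖v‖ ^ 2 * t from continuous_const.mul
        continuous_id).intervalIntegrable _ _)]
    rw [intervalIntegral.integral_const_mul, integral_id]
    simp
    ring
  have h0 : x + (0:ℝ) • v = x := by simp
  rw [h0] at key
  linarith [key, hmono, hval.le, hval.ge]

lemma pl_aux {d : ℕ} {u wstar g : EuclideanSpace ℝ (Fin d)} {fu fstar m : ℝ}
    (hm : 0 < m) (h : fstar ≥ fu + ⟪g, wstar - u⟫ + m / 2 * ‖wstar - u‖ ^ 2) :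
    fu - fstar ≤ ‖g‖ ^ 2 / (2 * m) := by
  have h1 : |⟪g, wstar - u⟫| ≤ ‖g‖ * ‖wstar - u‖ := abs_real_inner_le_norm _ _
  have h2 : -(‖g‖ * ‖wstar - u‖) ≤ ⟪g, wstar - u⟫ := neg_le_of_abs_le h1
  have h3 : 0 ≤ (‖g‖ - m * ‖wstar - u‖) ^ 2 := sq_nonneg _
  have hm' : 0 < 2 * m := by linarith
  rw [le_div_iff₀ hm']
  nlinarith [norm_nonneg g, norm_nonneg (wstar - u)]

lemma exp_contract (Δ : ℕ → ℝ) (ρ : ℝ) (hρ : 0 < ρ) (hnn : ∀ n, 0 ≤ Δ n)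
    (hc : ∀ n, Δ (n + 1) ≤ (1 - ρ) * Δ n) :
    ∀ n, Δ n ≤ Real.exp (-ρ * n) * Δ 0 := by
  by_cases h1 : ρ ≤ 1
  · intro n
    induction n with
    | zero => simp
    | succ n ih =>
      have he : (1 - ρ) ≤ Real.exp (-ρ) := by
        have := Real.add_one_le_exp (-ρ); linarith
      have h0 : (0:ℝ) ≤ 1 - ρ := by linarith
      calc Δ (n + 1) ≤ (1 - ρ) * Δ n := hc n
        _ ≤ Real.exp (-ρ) * Δ n := mul_le_mul_of_nonneg_right he (hnn n)
        _ ≤ Real.exp (-ρ) * (Real.exp (-ρ * n) * Δ 0) :=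
            mul_le_mul_of_nonneg_left ih (Real.exp_pos _).le
        _ = Real.exp (-ρ * (n + 1 : ℕ)) * Δ 0 := by
            rw [← mul_assoc, ← Real.exp_add]
            push_cast
            ring_nf
  · intro n
    match n with
    | 0 => simp
    | (m + 1) =>
      have : Δ (m + 1) ≤ (1 - ρ) * Δ m := hc m
      have h2 : (1 - ρ) * Δ m ≤ 0 :=
        mul_nonpos_of_nonpos_of_nonneg (by linarith) (hnn m)
      have := mul_nonneg (Real.exp_pos (-ρ * (m + 1 : ℕ))).le (hnn 0)
      linarith

lemma loc_descent {d : ℕ} (f : EuclideanSpace ℝ (Fin d) → ℝ)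
    (f' : EuclideanSpace ℝ (Fin d) → EuclideanSpace ℝ (Fin d))
    (hdiff : ∀ y, HasGradientAt f (f' y) y) (hcont : Continuous f')
    {Ls δ fstar : ℝ} (hLs : 0 < Ls)
    (hloc : ∀ u v, f u - fstar ≤ δ → f v - fstar ≤ δ → ‖f' u - f' v‖ ≤ Ls * ‖u - v‖)
    (x : EuclideanSpace ℝ (Fin d)) (hx : f x - fstar ≤ δ) :
    f (x - Ls⁻¹ • f' x) ≤ f x - ‖f' x‖ ^ 2 / (2 * Ls) := by
  by_cases hg0 : f' x = 0
  · simp [hg0]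
  set g := f' x with hg
  have hgn : 0 < ‖g‖ := norm_pos_iff.mpr hg0
  set v := -g with hv
  have hfc : Continuous f := by
    apply continuous_iff_continuousAt.2
    exact fun y => (hdiff y).differentiableAt.continuousAt
  set S : Set ℝ := {s | s ∈ Set.Icc (0:ℝ) Ls⁻¹ ∧
      ∀ t ∈ Set.Icc (0:ℝ) s, f (x + t • v) - fstar ≤ δ} with hS
  have h0S : (0:ℝ) ∈ S := by
    refine ⟨⟨le_refl 0, by positivity⟩, ?_⟩
    intro t ht
    have : t = 0 := le_antisymm ht.2 ht.1
    simpa [this] using hx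
  have hbdd : BddAbove S := ⟨Ls⁻¹, fun s hs => hs.1.2⟩
  set s₀ := sSup S with hs₀def
  have hs₀0 : 0 ≤ s₀ := le_csSup hbdd h0S
  have hs₀le : s₀ ≤ Ls⁻¹ := csSup_le ⟨0, h0S⟩ (fun s hs => hs.1.2)
  have hφc : Continuous fun u : ℝ => f (x + u • v) - fstar :=
    (hfc.comp (continuous_const.add (continuous_id.smul continuous_const))).sub
      continuous_const
  have hmemS : ∀ t ∈ Set.Icc (0:ℝ) s₀, f (x + t • v) - fstar ≤ δ := by
    rintro t ⟨ht0, hts⟩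
    rcases lt_or_eq_of_le hts with hlt | heq
    · obtain ⟨s, hsS, hts'⟩ := exists_lt_of_lt_csSup ⟨0, h0S⟩ hlt
      exact hsS.2 t ⟨ht0, hts'.le⟩
    · rw [heq]
      rcases eq_or_lt_of_le hs₀0 with h0 | h0
      · simpa [← h0] using h0S.2 0 ⟨le_rfl, le_rfl⟩
      · have hev : ∀ᶠ u in nhdsWithin s₀ (Set.Iio s₀), f (x + u • v) - fstar ≤ δ := by
          filter_upwards [Ioo_mem_nhdsLT_of_mem (⟨h0, le_rfl⟩ : s₀ ∈ Set.Ioc 0 s₀)] with u hu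
          obtain ⟨s, hsS, hus⟩ := exists_lt_of_lt_csSup ⟨0, h0S⟩ hu.2
          exact hsS.2 u ⟨hu.1.le, hus.le⟩
        have htend : Filter.Tendsto (fun u : ℝ => f (x + u • v) - fstar)
            (nhdsWithin s₀ (Set.Iio s₀)) (nhds (f (x + s₀ • v) - fstar)) := by
          exact Filter.Tendsto.mono_left (hφc.tendsto s₀) nhdsWithin_le_nhds
        exact le_of_tendsto htend hev
  have hfull : s₀ = Ls⁻¹ := by
    by_contra hne
    have hlt : s₀ < Ls⁻¹ := lt_of_le_of_ne hs₀le hne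
    have hy : f (x + s₀ • v) - fstar ≤ δ := hmemS s₀ ⟨hs₀0, le_rfl⟩
    have hgyL : ‖f' (x + s₀ • v) - g‖ ≤ Ls * (s₀ * ‖g‖) := by
      have h1 := hloc (x + s₀ • v) x hy hx
      rw [add_sub_cancel_left, norm_smul, hv, norm_neg] at h1
      rwa [Real.norm_eq_abs, abs_of_nonneg hs₀0] at h1
    have hLss₀ : Ls * s₀ < 1 := by
      calc Ls * s₀ < Ls * Ls⁻¹ := by exact mul_lt_mul_of_pos_left hlt hLs
        _ = 1 := mul_inv_cancel₀ (ne_of_gt hLs)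
    have hinnerpos : 0 < ⟪f' (x + s₀ • v), g⟫ := by
      have h1 : ⟪f' (x + s₀ • v) - g, g⟫ = ⟪f' (x + s₀ • v), g⟫ - ⟪g, g⟫ :=
        inner_sub_left _ _ _
      have h2 : |⟪f' (x + s₀ • v) - g, g⟫| ≤ ‖f' (x + s₀ • v) - g‖ * ‖g‖ :=
        abs_real_inner_le_norm _ _
      have h3 : ⟪g, g⟫ = ‖g‖ ^ 2 := real_inner_self_eq_norm_sq g
      have h4 := neg_le_of_abs_le h2
      nlinarith [mul_le_mul_of_nonneg_right hgyL (norm_nonneg g),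
        mul_lt_mul_of_pos_right hLss₀ (by positivity : (0:ℝ) < ‖g‖ ^ 2)]
    set c := ⟪f' (x + s₀ • v), v⟫ with hc
    have hcneg : c < 0 := by
      rw [hc, hv, inner_neg_right]
      linarith
    have hψd : HasDerivAt (fun u : ℝ => f (x + u • v)) c s₀ :=
      curve_deriv f f' hdiff x v s₀
    have hslope := hasDerivAt_iff_tendsto_slope.mp hψd
    have hslope' : Filter.Tendsto (slope (fun u : ℝ => f (x + u • v)) s₀)
        (nhdsWithin s₀ (Set.Ioi s₀)) (nhds c) :=
      hslope.mono_left (nhdsWithin_mono _ (fun u hu => ne_of_gt hu))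
    have hev : ∀ᶠ u in nhdsWithin s₀ (Set.Ioi s₀),
        slope (fun u : ℝ => f (x + u • v)) s₀ u < 0 :=
      hslope' (Iio_mem_nhds hcneg)
    obtain ⟨u', hu'1, hu'2⟩ := mem_nhdsGT_iff_exists_Ioc_subset.mp hev
    set s₁ := min u' Ls⁻¹ with hs₁def
    have hs₁ : s₀ < s₁ := lt_min hu'1 hlt
    have hs₁S : s₁ ∈ S := by
      refine ⟨⟨by linarith, min_le_right _ _⟩, ?_⟩
      rintro t ⟨ht0, hts₁⟩
      rcases le_or_gt t s₀ with h | h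
      · exact hmemS t ⟨ht0, h⟩
      · have htIoc : t ∈ Set.Ioc s₀ u' := ⟨h, le_trans hts₁ (min_le_left _ _)⟩
        have hsl : slope (fun u : ℝ => f (x + u • v)) s₀ t < 0 := hu'2 htIoc
        rw [slope_def_field] at hsl
        have hts : 0 < t - s₀ := by linarith
        have : f (x + t • v) - f (x + s₀ • v) < 0 := by
          have := div_neg_iff.mp hsl
          rcases this with ⟨h1, h2⟩ | ⟨h1, h2⟩
          · linarith
          · linarith
        linarith
    exact absurd (le_csSup hbdd hs₁S) (not_le.mpr hs₁)
  have hLip : ∀ t ∈ Set.Icc (0:ℝ) Ls⁻¹, ‖f' (x + t • v) - f' x‖ ≤ Ls * t * ‖v‖ := by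
    rintro t ⟨ht0, ht1⟩
    have h1 : f (x + t • v) - fstar ≤ δ := by
      rw [hfull] at hmemS
      exact hmemS t ⟨ht0, ht1⟩
    have h2 := hloc (x + t • v) x h1 hx
    rw [add_sub_cancel_left, norm_smul, Real.norm_eq_abs, abs_of_nonneg ht0] at h2
    calc ‖f' (x + t • v) - f' x‖ ≤ Ls * (t * ‖v‖) := h2
      _ = Ls * t * ‖v‖ := by ring
  have hkey := descent_aux f f' hdiff hcont x v Ls Ls⁻¹ (by positivity) hLip
  have hveq : ⟪f' x, v⟫ = -‖g‖ ^ 2 := by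
    rw [hv, inner_neg_right, ← hg, real_inner_self_eq_norm_sq]
  have hxeq : x + Ls⁻¹ • v = x - Ls⁻¹ • g := by
    rw [hv, smul_neg, sub_eq_add_neg]
  have hnv : ‖v‖ = ‖g‖ := by rw [hv, norm_neg]
  rw [hxeq, hveq, hnv] at hkey
  have harith : f x + Ls⁻¹ * -‖g‖ ^ 2 + Ls * Ls⁻¹ ^ 2 / 2 * ‖g‖ ^ 2
      = f x - ‖g‖ ^ 2 / (2 * Ls) := by
    field_simp
    ring
  linarith [hkey, harith.le, harith.ge]

lemma glob_descent {d : ℕ} (f : EuclideanSpace ℝ (Fin d) → ℝ)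
    (f' : EuclideanSpace ℝ (Fin d) → EuclideanSpace ℝ (Fin d))
    (hdiff : ∀ y, HasGradientAt f (f' y) y) (hcont : Continuous f')
    {L : ℝ} (hL : 0 < L)
    (hglob : ∀ u v, ‖f' u - f' v‖ ≤ L * ‖u - v‖)
    (x : EuclideanSpace ℝ (Fin d)) :
    f (x - L⁻¹ • f' x) ≤ f x - ‖f' x‖ ^ 2 / (2 * L) := by
  set g := f' x with hg
  set v := -g with hv
  have hLip : ∀ t ∈ Set.Icc (0:ℝ) L⁻¹, ‖f' (x + t • v) - f' x‖ ≤ L * t * ‖v‖ := by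
    rintro t ⟨ht0, _⟩
    have h2 := hglob (x + t • v) x
    rw [add_sub_cancel_left, norm_smul, Real.norm_eq_abs, abs_of_nonneg ht0] at h2
    calc ‖f' (x + t • v) - f' x‖ ≤ L * (t * ‖v‖) := h2
      _ = L * t * ‖v‖ := by ring
  have hkey := descent_aux f f' hdiff hcont x v L L⁻¹ (by positivity) hLip
  have hveq : ⟪f' x, v⟫ = -‖g‖ ^ 2 := by
    rw [hv, inner_neg_right, ← hg, real_inner_self_eq_norm_sq]
  have hxeq : x + L⁻¹ • v = x - L⁻¹ • g := by
    rw [hv, smul_neg, sub_eq_add_neg]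
  have hnv : ‖v‖ = ‖g‖ := by rw [hv, norm_neg]
  rw [hxeq, hveq, hnv] at hkey
  have harith : f x + L⁻¹ * -‖g‖ ^ 2 + L * L⁻¹ ^ 2 / 2 * ‖g‖ ^ 2
      = f x - ‖g‖ ^ 2 / (2 * L) := by
    field_simp
    ring
  linarith [hkey, harith.le, harith.ge]

lemma step_arith {D' D G C m : ℝ} (hC : 0 < C) (hm : 0 < m)
    (h1 : D' ≤ D - G / (2 * C)) (h2 : D ≤ G / (2 * m)) : D' ≤ (1 - m / C) * D := by
  rw [le_div_iff₀ (by positivity)] at h2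
  have h4 : D * (2 * m) / (2 * C) ≤ G / (2 * C) := by gcongr
  have heq : D * (2 * m) / (2 * C) = m / C * D := by field_simp
  have hexp : (1 - m / C) * D = D - m / C * D := by ring
  linarith

lemma exp_le_helper {a b c : ℝ} (hb : 0 < b) (ha : 0 < a)
    (h : Real.log (a / b) ≤ c) : Real.exp (-c) * a ≤ b := by
  have h1 : a / b = Real.exp (Real.log (a / b)) := (Real.exp_log (by positivity)).symm
  have h2 : a / b ≤ Real.exp c := h1.le.trans (Real.exp_le_exp.mpr h)
  have h3 : a ≤ Real.exp c * b := by rwa [div_le_iff₀ hb] at h2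
  calc Real.exp (-c) * a ≤ Real.exp (-c) * (Real.exp c * b) :=
      mul_le_mul_of_nonneg_left h3 (Real.exp_pos _).le
    _ = b := by
      rw [← mul_assoc, ← Real.exp_add, neg_add_cancel, Real.exp_zero, one_mul]

/-- Iteration complexity of gradient descent with exact line optimization
under glocal smoothness and glocal strong convexity (globally μ, locally μ_* on the
δ-sublevel set). -/
theorem gd_lo_glocal_strong_convexity_complexity {d : ℕ}
    (f : EuclideanSpace ℝ (Fin d) → ℝ)
    (f' : EuclideanSpace ℝ (Fin d) → EuclideanSpace ℝ (Fin d))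
    (L Ls δ ε μ μs fstar : ℝ)
    (hL : 0 < L) (hLs : 0 < Ls) (hμ : 0 < μ) (hμs : 0 < μs)
    (hdiff : ∀ x, HasGradientAt f (f' x) x)
    (hglob : ∀ u v, ‖f' u - f' v‖ ≤ L * ‖u - v‖)
    (hloc : ∀ u v, f u - fstar ≤ δ → f v - fstar ≤ δ → ‖f' u - f' v‖ ≤ Ls * ‖u - v‖)
    (hsc : ∀ u v, f v ≥ f u + ⟪f' u, v - u⟫ + μ / 2 * ‖v - u‖ ^ 2)
    (hscloc : ∀ u v, f u - fstar ≤ δ → f v - fstar ≤ δ →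
      f v ≥ f u + ⟪f' u, v - u⟫ + μs / 2 * ‖v - u‖ ^ 2)
    (hmin : ∃ wstar, f wstar = fstar ∧ ∀ x, fstar ≤ f x)
    (w : ℕ → EuclideanSpace ℝ (Fin d))
    (hΔδ : f (w 0) - fstar > δ) (hδε : δ > ε) (hε : ε > 0)
    (hstep : ∀ t : ℕ,
      (∃ η : ℝ, w (t + 1) = w t - η • f' (w t)) ∧
        ∀ η : ℝ, f (w (t + 1)) ≤ f (w t - η • f' (w t))) :
    ∀ T : ℕ,
      (⌈L / μ * Real.log ((f (w 0) - fstar) / δ)⌉ + ⌈Ls / μs * Real.log (δ / ε)⌉ : ℤ) ≤ T →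
      f (w T) - fstar ≤ ε := by
  obtain ⟨wstar, hws, hlb⟩ := hmin
  have hδ0 : 0 < δ := lt_trans hε hδε
  have hΔ00 : 0 < f (w 0) - fstar := by linarith
  have hcont : Continuous f' := by
    refine LipschitzWith.continuous (K := L.toNNReal) (LipschitzWith.of_dist_le_mul ?_)
    intro u v
    rw [dist_eq_norm, dist_eq_norm, Real.coe_toNNReal _ hL.le]
    exact hglob u v
  have hnn : ∀ z, 0 ≤ f z - fstar := fun z => by linarith [hlb z]
  have hmono : ∀ t, f (w (t + 1)) ≤ f (w t) := fun t => by
    simpa using (hstep t).2 0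
  have hplg : ∀ z, f z - fstar ≤ ‖f' z‖ ^ 2 / (2 * μ) := by
    intro z
    exact pl_aux hμ (hws ▸ hsc z wstar)
  have hpll : ∀ z, f z - fstar ≤ δ → f z - fstar ≤ ‖f' z‖ ^ 2 / (2 * μs) := by
    intro z hz
    have hwsδ : f wstar - fstar ≤ δ := by rw [hws]; linarith
    exact pl_aux hμs (hws ▸ hscloc z wstar hz hwsδ)
  set Δ : ℕ → ℝ := fun t => f (w t) - fstar with hΔ
  have hgstep : ∀ t, Δ (t + 1) ≤ (1 - μ / L) * Δ t := by
    intro t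
    have h1 := glob_descent f f' hdiff hcont hL hglob (w t)
    have h2 := (hstep t).2 L⁻¹
    exact step_arith hL hμ (by simp only [hΔ]; linarith) (hplg (w t))
  have hgbound := exp_contract Δ (μ / L) (by positivity) (fun n => hnn _) hgstep
  set T1z : ℤ := ⌈L / μ * Real.log ((f (w 0) - fstar) / δ)⌉ with hT1z
  set T2z : ℤ := ⌈Ls / μs * Real.log (δ / ε)⌉ with hT2z
  have hlog1 : 0 < Real.log ((f (w 0) - fstar) / δ) :=
    Real.log_pos ((one_lt_div hδ0).mpr hΔδ)
  have hlog2 : 0 < Real.log (δ / ε) := Real.log_pos ((one_lt_div hε).mpr hδε)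
  have hT1zpos : 0 < T1z := Int.ceil_pos.mpr (by positivity)
  have hT2zpos : 0 < T2z := Int.ceil_pos.mpr (by positivity)
  set T1 : ℕ := T1z.toNat with hT1
  set T2 : ℕ := T2z.toNat with hT2
  have hT1cast : ((T1 : ℕ) : ℝ) = (T1z : ℝ) := by
    rw [hT1]; exact_mod_cast Int.toNat_of_nonneg hT1zpos.le
  have hT2cast : ((T2 : ℕ) : ℝ) = (T2z : ℝ) := by
    rw [hT2]; exact_mod_cast Int.toNat_of_nonneg hT2zpos.le
  -- Phase 1: Δ T1 ≤ δ
  have hclaim1 : Δ T1 ≤ δ := by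
    have hb := hgbound T1
    have hT1ge : L / μ * Real.log ((f (w 0) - fstar) / δ) ≤ (T1 : ℝ) := by
      rw [hT1cast]; exact Int.le_ceil _
    have hlogle : Real.log ((f (w 0) - fstar) / δ) ≤ μ / L * T1 := by
      have h := mul_le_mul_of_nonneg_left hT1ge (le_of_lt (div_pos hμ hL))
      have heq : μ / L * (L / μ * Real.log ((f (w 0) - fstar) / δ))
          = Real.log ((f (w 0) - fstar) / δ) := by field_simp
      linarith
    have hex := exp_le_helper hδ0 hΔ00 hlogle
    rw [neg_mul] at hb
    simp only [hΔ] at hb ⊢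
    linarith
  -- monotone: Δ (T1 + n) ≤ δ for all n
  have hclaim2 : ∀ n, Δ (T1 + n) ≤ δ := by
    intro n
    induction n with
    | zero => simpa using hclaim1
    | succ n ih =>
      have h7 : Δ (T1 + (n + 1)) ≤ Δ (T1 + n) := by
        simp only [hΔ]
        have he : T1 + (n + 1) = (T1 + n) + 1 := by ring
        rw [he]
        linarith [hmono (T1 + n)]
      linarith
  -- Phase 2 contraction
  have hlstep : ∀ n, Δ (T1 + (n + 1)) ≤ (1 - μs / Ls) * Δ (T1 + n) := by
    intro n
    have hz : Δ (T1 + n) ≤ δ := hclaim2 n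
    have h1 := loc_descent f f' hdiff hcont hLs hloc (w (T1 + n)) hz
    have h2 := (hstep (T1 + n)).2 Ls⁻¹
    have h8 : T1 + (n + 1) = (T1 + n) + 1 := by ring
    rw [h8]
    exact step_arith hLs hμs (by simp only [hΔ]; linarith) (hpll (w (T1 + n)) hz)
  have hlbound := exp_contract (fun n => Δ (T1 + n)) (μs / Ls) (by positivity)
    (fun n => hnn _) hlstep
  intro T hT
  have hTge : T1 + T2 ≤ T := by
    have h9 : ((T1 + T2 : ℕ) : ℤ) = T1z + T2z := by
      push_cast [hT1, hT2, Int.toNat_of_nonneg hT1zpos.le, Int.toNat_of_nonneg hT2zpos.le]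
      ring
    have h10 : ((T1 + T2 : ℕ) : ℤ) ≤ (T : ℤ) := by rw [h9]; exact hT
    exact_mod_cast h10
  set n : ℕ := T - T1 with hn
  have hTeq : T = T1 + n := by omega
  have hnT2 : T2 ≤ n := by omega
  have hb := hlbound n
  have hT2ge : Ls / μs * Real.log (δ / ε) ≤ (T2 : ℝ) := by
    rw [hT2cast]; exact Int.le_ceil _
  have hlogle : Real.log (δ / ε) ≤ μs / Ls * n := by
    have h := mul_le_mul_of_nonneg_left hT2ge (le_of_lt (div_pos hμs hLs))
    have heq : μs / Ls * (Ls / μs * Real.log (δ / ε)) = Real.log (δ / ε) := by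
      field_simp
    have hcast : (T2 : ℝ) ≤ (n : ℝ) := by exact_mod_cast hnT2
    have h10 : μs / Ls * (T2 : ℝ) ≤ μs / Ls * (n : ℝ) :=
      mul_le_mul_of_nonneg_left hcast (by positivity)
    linarith
  have hex := exp_le_helper hε hδ0 hlogle
  rw [neg_mul] at hb
  have hst : Real.exp (-(μs / Ls * n)) * Δ (T1 + 0) ≤ Real.exp (-(μs / Ls * n)) * δ :=
    mul_le_mul_of_nonneg_left (by simpa using hclaim1) (Real.exp_pos _).le
  have hfin : Δ T ≤ ε := by
    rw [hTeq]
    exact le_trans hb (le_trans hst hex)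
  simpa [hΔ] using hfin
end

section
/- There exist absolute constants C₁, C₂ > 0 such that the following holds. Let f : ℝ^d → ℝ be differentiable, convex, coercive, glocally (L, L_*, δ)-smooth, and μ_*-strongly convex on the sublevel set {w : f(w) − f_* ≤ δ}, with Δ₀ = f(w₀) − f_* > δ > ε > 0. Define R²(ρ) = sup{‖w − w_*‖² : f(w) ≤ ρ, w_* a minimizer of f} (finite by coercivity). Let (w_t) be gradient-descent iterates w_{t+1} = w_t − η_t∇f(w_t) with each η_t chosen by exact line optimization. Then f(w_T) − f_* ≤ ε for every natural number T with T ≥ C₁(L/δ)R²(f(w₀)) + C₂(L_*/μ_*)log(δ/ε). -/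
open scoped RealInnerProductSpace

variable {F : Type*} [NormedAddCommGroup F] [InnerProductSpace ℝ F] [CompleteSpace F]

lemma gd_aux_lineDeriv (f : F → ℝ) (f' : F → F) (hf : ∀ x, HasGradientAt f (f' x) x)
    (x d : F) (t : ℝ) :
    HasDerivAt (fun s : ℝ => f (x + s • d)) ⟪f' (x + t • d), d⟫ t := by
  have h1 : HasDerivAt (fun s : ℝ => x + s • d) d t := by
    simpa using ((hasDerivAt_id t).smul_const d).const_add x
  have h2 := (hf (x + t • d)).hasFDerivAt.comp_hasDerivAt t h1
  simpa [InnerProductSpace.toDual_apply_apply, Function.comp_def] using h2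

lemma gd_aux_descent_seg (f : F → ℝ) (f' : F → F) (hf : ∀ x, HasGradientAt f (f' x) x)
    (x d : F) (K c : ℝ) (hc : 0 ≤ c)
    (hlip : ∀ s ∈ Set.Icc (0:ℝ) c, ⟪f' (x + s • d) - f' x, d⟫ ≤ K * s) :
    f (x + c • d) ≤ f x + c * ⟪f' x, d⟫ + K * c ^ 2 / 2 := by
  set φ : ℝ → ℝ := fun s => f (x + s • d) - s * ⟪f' x, d⟫ - K * s ^ 2 / 2 with hφ
  have hφ' : ∀ s : ℝ, HasDerivAt φ (⟪f' (x + s • d), d⟫ - ⟪f' x, d⟫ - K * s) s := by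
    intro s
    have h1 := gd_aux_lineDeriv f f' hf x d s
    have h2 : HasDerivAt (fun s : ℝ => s * ⟪f' x, d⟫) ⟪f' x, d⟫ s := by
      simpa using (hasDerivAt_id s).mul_const ⟪f' x, d⟫
    have h3 : HasDerivAt (fun s : ℝ => K * s ^ 2 / 2) (K * s) s := by
      have := ((hasDerivAt_pow 2 s).const_mul K).div_const 2
      exact this.congr_deriv (by push_cast; ring)
    exact (h1.sub h2).sub h3
  have hanti : AntitoneOn φ (Set.Icc 0 c) := by
    apply antitoneOn_of_deriv_nonpos (convex_Icc 0 c)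
    · exact Continuous.continuousOn
        (Differentiable.continuous fun s => (hφ' s).differentiableAt)
    · intro s hs
      exact ((hφ' s).differentiableAt).differentiableWithinAt
    · intro s hs
      rw [interior_Icc] at hs
      rw [(hφ' s).deriv]
      have := hlip s ⟨hs.1.le, hs.2.le⟩
      have h4 : ⟪f' (x + s • d) - f' x, d⟫ = ⟪f' (x + s • d), d⟫ - ⟪f' x, d⟫ := by
        rw [inner_sub_left]
      linarith [h4 ▸ this]
  have h0 : φ c ≤ φ 0 := hanti (Set.left_mem_Icc.mpr hc) (Set.right_mem_Icc.mpr hc) hc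
  simp only [hφ, zero_smul, add_zero, zero_mul, ne_eq, OfNat.ofNat_ne_zero] at h0
  have : f (x + 0 • d) = f x := by simp
  nlinarith [h0]

lemma gd_aux_convexOn_line (f : F → ℝ) (hconv : ConvexOn ℝ Set.univ f) (x d : F) :
    ConvexOn ℝ Set.univ (fun s : ℝ => f (x + s • d)) := by
  have := hconv.comp_affineMap (AffineMap.lineMap x (x + d))
  simpa [Function.comp_def, AffineMap.lineMap_apply, add_comm] using this

lemma gd_aux_local_descent (f : F → ℝ) (f' : F → F) (hf : ∀ x, HasGradientAt f (f' x) x)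
    (hconv : ConvexOn ℝ Set.univ f) (Ls fstar δ : ℝ) (hLs : 0 < Ls)
    (hloc : ∀ u v, f u - fstar ≤ δ → f v - fstar ≤ δ → ‖f' u - f' v‖ ≤ Ls * ‖u - v‖)
    (x : F) (hx : f x - fstar ≤ δ) :
    f (x + (1 / Ls) • (-(f' x))) ≤ f x - ‖f' x‖ ^ 2 / (2 * Ls) := by
  by_cases hg : f' x = 0
  · simp [hg]
  set g := f' x with hgdef
  have hgn : 0 < ‖g‖ := norm_pos_iff.mpr hg
  set h : ℝ → ℝ := fun s => f (x + s • (-g)) with hh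
  have hcont : Continuous h := by
    have : Differentiable ℝ h := fun s =>
      (gd_aux_lineDeriv f f' hf x (-g) s).differentiableAt
    exact this.continuous
  have hh0 : h 0 = f x := by simp [hh]
  set A : Set ℝ := {s ∈ Set.Icc (0:ℝ) (1/Ls) | h s ≤ h 0} with hA
  have hAconv : Convex ℝ A := by
    have := (gd_aux_convexOn_line f hconv x (-g)).convex_le (h 0)
    have h2 : A = Set.Icc (0:ℝ) (1/Ls) ∩ {s : ℝ | s ∈ Set.univ ∧ h s ≤ h 0} := by
      ext s; simp [hA]
    rw [h2]
    exact (convex_Icc _ _).inter this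
  have hAclosed : IsClosed A := by
    have h2 : A = Set.Icc (0:ℝ) (1/Ls) ∩ {s : ℝ | h s ≤ h 0} := by ext s; simp [hA]
    rw [h2]
    exact isClosed_Icc.inter (isClosed_le hcont continuous_const)
  have h0A : (0:ℝ) ∈ A := ⟨Set.left_mem_Icc.mpr (by positivity), le_refl _⟩
  have hAbdd : BddAbove A := ⟨1/Ls, fun s hs => hs.1.2⟩
  set c : ℝ := sSup A with hcdef
  have hcA : c ∈ A := hAclosed.csSup_mem ⟨0, h0A⟩ hAbdd
  have hc0 : 0 ≤ c := le_csSup hAbdd h0A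
  have hcle : c ≤ 1/Ls := hcA.1.2
  have hsub : Set.Icc 0 c ⊆ A := hAconv.ordConnected.out h0A hcA
  have hlev : ∀ s ∈ Set.Icc (0:ℝ) c, f (x + s • (-g)) - fstar ≤ δ := by
    intro s hs
    have := (hsub hs).2
    rw [hh0] at this
    calc f (x + s • (-g)) - fstar ≤ f x - fstar := by simpa [hh] using sub_le_sub_right this fstar
    _ ≤ δ := hx
  have hdesc : ∀ c' : ℝ, 0 ≤ c' → c' ≤ c →
      f (x + c' • (-g)) ≤ f x - c' * ‖g‖ ^ 2 + Ls * ‖g‖ ^ 2 * c' ^ 2 / 2 := by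
    intro c' hc'0 hc'c
    have hlip : ∀ s ∈ Set.Icc (0:ℝ) c', ⟪f' (x + s • (-g)) - f' x, -g⟫ ≤ (Ls * ‖g‖ ^ 2) * s := by
      intro s hs
      have hs' : s ∈ Set.Icc (0:ℝ) c := ⟨hs.1, hs.2.trans hc'c⟩
      have h1 := real_inner_le_norm (f' (x + s • (-g)) - f' x) (-g)
      have h2 : ‖f' (x + s • (-g)) - f' x‖ ≤ Ls * (s * ‖g‖) := by
        have := hloc (x + s • (-g)) x (hlev s hs') hx
        calc ‖f' (x + s • (-g)) - f' x‖ ≤ Ls * ‖(x + s • (-g)) - x‖ := this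
        _ = Ls * (s * ‖g‖) := by
            rw [add_sub_cancel_left, norm_smul, norm_neg, Real.norm_eq_abs,
              abs_of_nonneg hs.1]
      calc ⟪f' (x + s • (-g)) - f' x, -g⟫ ≤ ‖f' (x + s • (-g)) - f' x‖ * ‖-g‖ := h1
        _ = ‖f' (x + s • (-g)) - f' x‖ * ‖g‖ := by rw [norm_neg]
        _ ≤ (Ls * (s * ‖g‖)) * ‖g‖ := mul_le_mul_of_nonneg_right h2 (norm_nonneg g)
        _ = (Ls * ‖g‖ ^ 2) * s := by ring
    have := gd_aux_descent_seg f f' hf x (-g) (Ls * ‖g‖ ^ 2) c' hc'0 hlip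
    have hin : ⟪f' x, -g⟫ = -‖g‖ ^ 2 := by
      rw [inner_neg_right, ← hgdef, real_inner_self_eq_norm_sq]
    rw [hin] at this
    calc f (x + c' • (-g)) ≤ f x + c' * -‖g‖ ^ 2 + Ls * ‖g‖ ^ 2 * c' ^ 2 / 2 := this
    _ = f x - c' * ‖g‖ ^ 2 + Ls * ‖g‖ ^ 2 * c' ^ 2 / 2 := by ring
  have hceq : c = 1/Ls := by
    by_contra hne
    have hclt : c < 1/Ls := lt_of_le_of_ne hcle hne
    have hkey : ∃ s : ℝ, s ∈ Set.Ioo c (1/Ls) ∧ h s ≤ h 0 := by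
      rcases eq_or_lt_of_le hc0 with hc0' | hcpos
      · -- c = 0 : use derivative
        have h5 : ⟪f' (x + (0:ℝ) • (-g)), -g⟫ = -‖g‖ ^ 2 := by
          rw [zero_smul, add_zero, ← hgdef, inner_neg_right, real_inner_self_eq_norm_sq]
        have hd0 : HasDerivAt h (-‖g‖ ^ 2) 0 := by
          have := gd_aux_lineDeriv f f' hf x (-g) 0
          rwa [h5] at this
        have hsl := hasDerivAt_iff_tendsto_slope.mp hd0
        have hev : ∀ᶠ s in nhdsWithin (0:ℝ) {(0:ℝ)}ᶜ, slope h 0 s < 0 := by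
          apply hsl.eventually_lt_const
          nlinarith
        have hmono : nhdsWithin (0:ℝ) (Set.Ioi 0) ≤ nhdsWithin (0:ℝ) {(0:ℝ)}ᶜ :=
          nhdsWithin_mono _ fun y hy => ne_of_gt hy
        have hev' : ∀ᶠ s in nhdsWithin (0:ℝ) (Set.Ioi 0), slope h 0 s < 0 := hmono hev
        have hmem : Set.Ioo (0:ℝ) (1/Ls) ∈ nhdsWithin (0:ℝ) (Set.Ioi 0) :=
          Ioo_mem_nhdsGT_of_mem ⟨le_refl 0, by positivity⟩
        have : ∀ᶠ s in nhdsWithin (0:ℝ) (Set.Ioi 0),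
            slope h 0 s < 0 ∧ s ∈ Set.Ioo (0:ℝ) (1/Ls) := hev'.and hmem
        obtain ⟨s, hs1, hs2⟩ := this.exists
        refine ⟨s, by rwa [← hc0'], ?_⟩
        rw [slope_def_field] at hs1
        have hspos : 0 < s := hs2.1
        have hdiv : (h s - h 0) / s < 0 := by rwa [sub_zero] at hs1
        have hnum : h s - h 0 < 0 := by
          by_contra hcon
          push_neg at hcon
          have : 0 ≤ (h s - h 0) / s := div_nonneg hcon hspos.le
          linarith
        linarith
      · -- c > 0 : use continuity
        have hlt : h c < h 0 := by
          have := hdesc c hc0 (le_refl c)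
          have hhc : h c = f (x + c • (-g)) := rfl
          rw [hh0, hhc]
          have h6 : c * Ls < 1 := (lt_div_iff₀ hLs).mp hclt
          have h7 : c * Ls * (c * ‖g‖ ^ 2) < 1 * (c * ‖g‖ ^ 2) :=
            mul_lt_mul_of_pos_right h6 (by positivity)
          nlinarith [h7, mul_pos hcpos (pow_pos hgn 2)]
        have hU : IsOpen {s : ℝ | h s < h 0} := isOpen_lt hcont continuous_const
        have hUnhds : {s : ℝ | h s < h 0} ∈ nhdsWithin c (Set.Ioi c) :=
          nhdsWithin_le_nhds (hU.mem_nhds hlt)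
        have hmem : Set.Ioo c (1/Ls) ∈ nhdsWithin c (Set.Ioi c) :=
          Ioo_mem_nhdsGT_of_mem ⟨le_refl c, hclt⟩
        obtain ⟨s, hs1, hs2⟩ := (Filter.eventually_iff.mpr hUnhds).and
          (Filter.eventually_iff.mpr hmem) |>.exists
        exact ⟨s, hs2, le_of_lt hs1⟩
    obtain ⟨s, hs, hsle⟩ := hkey
    have hsA : s ∈ A := ⟨⟨hc0.trans hs.1.le, hs.2.le⟩, hsle⟩
    exact absurd (le_csSup hAbdd hsA) (not_le.mpr hs.1)
  have := hdesc (1/Ls) (by positivity) (hceq.ge)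
  calc f (x + (1/Ls) • (-(f' x))) ≤ f x - (1/Ls) * ‖g‖ ^ 2 + Ls * ‖g‖ ^ 2 * (1/Ls) ^ 2 / 2 := this
  _ = f x - ‖f' x‖ ^ 2 / (2 * Ls) := by
      rw [← hgdef]; field_simp; ring

lemma gd_aux_grad_ineq (f : F → ℝ) (f' : F → F) (hf : ∀ x, HasGradientAt f (f' x) x)
    (hconv : ConvexOn ℝ Set.univ f) (u v : F) :
    f u + ⟪f' u, v - u⟫ ≤ f v := by
  set h : ℝ → ℝ := fun s => f (u + s • (v - u)) with hh
  have hc : ConvexOn ℝ Set.univ h := gd_aux_convexOn_line f hconv u (v - u)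
  have hd : HasDerivAt h ⟪f' u, v - u⟫ 0 := by
    simpa using gd_aux_lineDeriv f f' hf u (v - u) 0
  have := hc.le_slope_of_hasDerivAt (Set.mem_univ 0) (Set.mem_univ 1) one_pos hd
  have hs : slope h 0 1 = f v - f u := by
    simp [slope_def_field, hh]
  rw [hs] at this
  linarith

lemma gd_aux_global_step (f : F → ℝ) (f' : F → F) (hf : ∀ x, HasGradientAt f (f' x) x)
    (L : ℝ) (hL : 0 < L) (hglob : ∀ u v, ‖f' u - f' v‖ ≤ L * ‖u - v‖) (x : F) :
    f (x + (1 / L) • (-(f' x))) ≤ f x - ‖f' x‖ ^ 2 / (2 * L) := by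
  set g := f' x with hgdef
  have hlip : ∀ s ∈ Set.Icc (0:ℝ) (1/L), ⟪f' (x + s • (-g)) - f' x, -g⟫ ≤ (L * ‖g‖ ^ 2) * s := by
    intro s hs
    have h1 := real_inner_le_norm (f' (x + s • (-g)) - f' x) (-g)
    have h2 : ‖f' (x + s • (-g)) - f' x‖ ≤ L * (s * ‖g‖) := by
      calc ‖f' (x + s • (-g)) - f' x‖ ≤ L * ‖(x + s • (-g)) - x‖ := hglob _ _
      _ = L * (s * ‖g‖) := by
          rw [add_sub_cancel_left, norm_smul, norm_neg, Real.norm_eq_abs,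
            abs_of_nonneg hs.1]
    calc ⟪f' (x + s • (-g)) - f' x, -g⟫ ≤ ‖f' (x + s • (-g)) - f' x‖ * ‖-g‖ := h1
      _ = ‖f' (x + s • (-g)) - f' x‖ * ‖g‖ := by rw [norm_neg]
      _ ≤ (L * (s * ‖g‖)) * ‖g‖ := mul_le_mul_of_nonneg_right h2 (norm_nonneg g)
      _ = (L * ‖g‖ ^ 2) * s := by ring
  have hmain := gd_aux_descent_seg f f' hf x (-g) (L * ‖g‖ ^ 2) (1/L) (by positivity) hlip
  have hin : ⟪f' x, -g⟫ = -‖g‖ ^ 2 := by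
    rw [← hgdef, inner_neg_right, real_inner_self_eq_norm_sq]
  rw [hin] at hmain
  calc f (x + (1/L) • (-(f' x))) ≤ f x + (1/L) * -‖g‖ ^ 2 + L * ‖g‖ ^ 2 * (1/L) ^ 2 / 2 := hmain
  _ = f x - ‖f' x‖ ^ 2 / (2 * L) := by
      rw [← hgdef]; field_simp; ring


set_option maxHeartbeats 1000000 in
/-- Iteration complexity of gradient descent with exact line optimization
for globally convex, coercive, glocally (L, L_*, δ)-smooth functions that are
μ_*-strongly convex on the δ-sublevel set, up to absolute constants C₁, C₂. -/
theorem gd_lo_convex_locally_strongly_convex_complexity :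
    ∃ C₁ C₂ : ℝ, 0 < C₁ ∧ 0 < C₂ ∧
    ∀ (d : ℕ) (f : EuclideanSpace ℝ (Fin d) → ℝ)
      (f' : EuclideanSpace ℝ (Fin d) → EuclideanSpace ℝ (Fin d))
      (L Ls δ ε μs fstar : ℝ)
      (w : ℕ → EuclideanSpace ℝ (Fin d)),
      0 < L → 0 < Ls → 0 < μs →
      (∀ x, HasGradientAt f (f' x) x) →
      ConvexOn ℝ Set.univ f →
      Filter.Tendsto f (Filter.comap norm Filter.atTop) Filter.atTop →
      (∀ u v, ‖f' u - f' v‖ ≤ L * ‖u - v‖) →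
      (∀ u v, f u - fstar ≤ δ → f v - fstar ≤ δ → ‖f' u - f' v‖ ≤ Ls * ‖u - v‖) →
      (∀ u v, f u - fstar ≤ δ → f v - fstar ≤ δ →
        f v ≥ f u + ⟪f' u, v - u⟫ + μs / 2 * ‖v - u‖ ^ 2) →
      (∃ wstar, f wstar = fstar ∧ ∀ x, fstar ≤ f x) →
      f (w 0) - fstar > δ → δ > ε → ε > 0 →
      (∀ t : ℕ,
        (∃ η : ℝ, w (t + 1) = w t - η • f' (w t)) ∧
          ∀ η : ℝ, f (w (t + 1)) ≤ f (w t - η • f' (w t))) →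
      ∀ T : ℕ,
        C₁ * (L / δ) *
            sSup {r : ℝ | ∃ u wstar : EuclideanSpace ℝ (Fin d),
              f u ≤ f (w 0) ∧ (∀ x, f wstar ≤ f x) ∧ r = ‖u - wstar‖ ^ 2} +
          C₂ * (Ls / μs) * Real.log (δ / ε) ≤ T →
        f (w T) - fstar ≤ ε := by
  refine ⟨4, 1, by norm_num, by norm_num, ?_⟩
  intro d f f' L Ls δ ε μs fstar w hL hLs hμs hgrad hconv hcoer hglob hloc hsc hmin hΔ0 hδε hε hls T hT
  obtain ⟨ws, hwsf, hwsmin⟩ := hmin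
  set S := {r : ℝ | ∃ u wstar : EuclideanSpace ℝ (Fin d),
      f u ≤ f (w 0) ∧ (∀ x, f wstar ≤ f x) ∧ r = ‖u - wstar‖ ^ 2} with hS
  have hδpos : 0 < δ := lt_trans hε hδε
  -- gradient at minimizer is zero
  have hgws : f' ws = 0 := by
    have hlm : IsLocalMin f ws :=
      Filter.Eventually.of_forall (fun x => hwsf ▸ hwsmin x)
    have h0 := hlm.hasFDerivAt_eq_zero (hgrad ws).hasFDerivAt
    have := (InnerProductSpace.toDual ℝ (EuclideanSpace ℝ (Fin d))).map_eq_zero_iff.mp h0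
    exact this
  have hmono : ∀ t, f (w (t+1)) ≤ f (w t) := fun t => by simpa using (hls t).2 0
  have hfw0 : ∀ t, f (w t) ≤ f (w 0) := by
    intro t
    induction t with
    | zero => exact le_refl _
    | succ n ih => exact (hmono n).trans ih
  have hge : ∀ x, fstar ≤ f x := hwsmin
  -- coercivity
  obtain ⟨r₀, hr₀⟩ : ∃ r₀ : ℝ, ∀ x : EuclideanSpace ℝ (Fin d), r₀ ≤ ‖x‖ → f (w 0) + 1 ≤ f x := by
    have h1 := (Filter.tendsto_atTop.mp hcoer) (f (w 0) + 1)
    rw [Filter.eventually_comap] at h1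
    rw [Filter.eventually_atTop] at h1
    obtain ⟨r₀, h⟩ := h1
    exact ⟨r₀, fun x hx => h ‖x‖ hx x rfl⟩
  have hbdd : BddAbove S := by
    refine ⟨(2 * max r₀ 0) ^ 2, ?_⟩
    rintro r ⟨u, wst, hu, hwst, rfl⟩
    have hub : ∀ v : EuclideanSpace ℝ (Fin d), f v ≤ f (w 0) → ‖v‖ ≤ max r₀ 0 := by
      intro v hv
      by_contra hcon
      push_neg at hcon
      have := hr₀ v ((le_max_left _ _).trans hcon.le)
      linarith
    have h1 := hub u hu
    have h2 := hub wst (hwst (w 0))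
    have h3 : ‖u - wst‖ ≤ 2 * max r₀ 0 := (norm_sub_le u wst).trans (by linarith)
    exact pow_le_pow_left₀ (norm_nonneg _) h3 2
  have hmem : ∀ u, f u ≤ f (w 0) → ‖u - ws‖ ^ 2 ∈ S :=
    fun u hu => ⟨u, ws, hu, fun x => hwsf ▸ hge x, rfl⟩
  set R2 := sSup S with hR2def
  have hR2maj : ∀ t, ‖w t - ws‖ ^ 2 ≤ R2 := fun t => le_csSup hbdd (hmem _ (hfw0 t))
  have hR2nonneg : 0 ≤ R2 := le_trans (by positivity) (hR2maj 0)
  set R := Real.sqrt R2 with hRdef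
  have hRnn : 0 ≤ R := Real.sqrt_nonneg _
  have hRsq : R ^ 2 = R2 := Real.sq_sqrt hR2nonneg
  have hdist : ∀ t, ‖w t - ws‖ ≤ R := by
    intro t
    rw [hRdef]
    rw [show ‖w t - ws‖ = Real.sqrt (‖w t - ws‖ ^ 2) by
      rw [Real.sqrt_sq (norm_nonneg _)]]
    exact Real.sqrt_le_sqrt (hR2maj t)
  set Δ : ℕ → ℝ := fun t => f (w t) - fstar with hΔdef
  have hΔnn : ∀ t, 0 ≤ Δ t := fun t => sub_nonneg.mpr (hge _)
  have hΔmono : ∀ t, Δ (t+1) ≤ Δ t := fun t => sub_le_sub_right (hmono t) _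
  have hgd : ∀ t, Δ t ≤ ‖f' (w t)‖ * R := by
    intro t
    have h1 := gd_aux_grad_ineq f f' hgrad hconv (w t) ws
    rw [hwsf] at h1
    have h2 : ⟪f' (w t), w t - ws⟫ ≤ ‖f' (w t)‖ * ‖w t - ws‖ := real_inner_le_norm _ _
    have h3 : ⟪f' (w t), ws - w t⟫ = -⟪f' (w t), w t - ws⟫ := by
      rw [show ws - w t = -(w t - ws) from (neg_sub (w t) ws).symm, inner_neg_right]
    have h4 : ‖f' (w t)‖ * ‖w t - ws‖ ≤ ‖f' (w t)‖ * R :=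
      mul_le_mul_of_nonneg_left (hdist t) (norm_nonneg _)
    simp only [hΔdef]
    linarith [h3 ▸ h1]
  have hdescG : ∀ t, ‖f' (w t)‖ ^ 2 ≤ 2 * L * (Δ t - Δ (t+1)) := by
    intro t
    have h1 := gd_aux_global_step f f' hgrad L hL hglob (w t)
    have h2 := (hls t).2 (1/L)
    have h3 : w t - (1/L) • f' (w t) = w t + (1/L) • (-(f' (w t))) := by
      rw [smul_neg, sub_eq_add_neg]
    rw [h3] at h2
    have h4 : f (w (t+1)) ≤ f (w t) - ‖f' (w t)‖ ^ 2 / (2*L) := h2.trans h1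
    have h5 : ‖f' (w t)‖ ^ 2 / (2*L) ≤ f (w t) - f (w (t+1)) := by linarith
    have h6 := (div_le_iff₀ (by positivity : (0:ℝ) < 2*L)).mp h5
    simp only [hΔdef]
    nlinarith [h6]
  have hkey : ∀ t, Δ t ^ 2 ≤ 2*L*R2 * (Δ t - Δ (t+1)) := by
    intro t
    have h1 : Δ t ^ 2 ≤ (‖f' (w t)‖ * R) ^ 2 := pow_le_pow_left₀ (hΔnn t) (hgd t) 2
    have h2 : (‖f' (w t)‖ * R) ^ 2 = ‖f' (w t)‖ ^ 2 * R2 := by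
      rw [mul_pow, hRsq]
    have h3 : ‖f' (w t)‖ ^ 2 * R2 ≤ 2*L*(Δ t - Δ (t+1)) * R2 :=
      mul_le_mul_of_nonneg_right (hdescG t) hR2nonneg
    calc Δ t ^ 2 ≤ ‖f' (w t)‖ ^ 2 * R2 := h2 ▸ h1
    _ ≤ 2*L*(Δ t - Δ (t+1)) * R2 := h3
    _ = 2*L*R2 * (Δ t - Δ (t+1)) := by ring
  set A := 2*L*R2 with hAdef
  have hwne : w 0 ≠ ws := by
    intro h
    rw [h, hwsf] at hΔ0
    linarith
  have hR2pos : 0 < R2 := by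
    have h1 : ‖w 0 - ws‖ ^ 2 ≤ R2 := hR2maj 0
    have h2 : 0 < ‖w 0 - ws‖ := norm_pos_iff.mpr (sub_ne_zero.mpr hwne)
    nlinarith
  have hApos : 0 < A := by positivity
  have hind : ∀ t : ℕ, Δ t ≤ δ ∨ (t:ℝ) * Δ t ≤ A := by
    intro t
    induction t with
    | zero => right; simpa using hApos.le
    | succ n ih =>
      by_cases hc : Δ (n+1) ≤ δ
      · exact Or.inl hc
      right
      push_neg at hc
      have hΔn : δ < Δ n := lt_of_lt_of_le hc (hΔmono n)
      have h2 : (n:ℝ) * Δ n ≤ A := by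
        rcases ih with h | h
        · linarith
        · exact h
      have hx := hkey n
      have hΔnpos : 0 < Δ n := lt_trans hδpos hΔn
      have h5 : Δ n * Δ (n+1) ≤ Δ n ^ 2 := by nlinarith [hΔmono n, hΔnn (n+1)]
      have h6 : (n:ℝ) * Δ n * Δ (n+1) ≤ A * Δ (n+1) :=
        mul_le_mul_of_nonneg_right h2 (hΔnn (n+1))
      have h7 : ((n:ℝ)+1) * Δ n * Δ (n+1) ≤ A * Δ n := by linarith
      have h9 : ((n:ℝ)+1) * Δ (n+1) ≤ A :=
        le_of_mul_le_mul_right (by linarith [h7]) hΔnpos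
      push_cast
      linarith
  have hLR2δ : δ < L * R2 := by
    have h1 := hgd 0
    have h2 : ‖f' (w 0)‖ ≤ L * R := by
      have h := hglob (w 0) ws
      rw [hgws, sub_zero] at h
      exact h.trans (mul_le_mul_of_nonneg_left (hdist 0) hL.le)
    have h3 : Δ 0 ≤ L * R * R := h1.trans (mul_le_mul_of_nonneg_right h2 hRnn)
    have h4 : R * R = R2 := by nlinarith [hRsq]
    have h5 : δ < Δ 0 := hΔ0
    nlinarith
  set a := A / δ with hadef
  have ha2 : 2 < a := by
    rw [hadef, lt_div_iff₀ hδpos, hAdef]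
    linarith
  set n₁ := ⌈a⌉₊ with hn₁def
  have hn₁a : (n₁:ℝ) < a + 1 := Nat.ceil_lt_add_one (by linarith)
  have han₁ : a ≤ (n₁:ℝ) := Nat.le_ceil a
  have hlog0 : 0 ≤ Real.log (δ/ε) := Real.log_nonneg (by rw [le_div_iff₀ hε]; linarith)
  have hblog : 0 ≤ (Ls/μs) * Real.log (δ/ε) :=
    mul_nonneg (div_nonneg hLs.le hμs.le) hlog0
  have h2a : 4*(L/δ)*R2 = 2*a := by
    rw [hadef, hAdef]
    field_simp
    ring
  have hTn₁ : (n₁:ℝ) + (Ls/μs)*Real.log (δ/ε) ≤ (T:ℝ) := by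
    have : 2*a + (Ls/μs)*Real.log (δ/ε) ≤ (T:ℝ) := by
      rw [← h2a]
      calc 4*(L/δ)*R2 + (Ls/μs)*Real.log (δ/ε)
          = 4*(L/δ)*R2 + 1*(Ls/μs)*Real.log (δ/ε) := by ring
        _ ≤ (T:ℝ) := hT
    linarith
  have hn₁T : n₁ ≤ T := by
    have h : (n₁:ℝ) ≤ (T:ℝ) := by linarith
    exact_mod_cast h
  have hΔn₁ : Δ n₁ ≤ δ := by
    rcases hind n₁ with h | h
    · exact h
    by_contra hcon
    push_neg at hcon
    have hn₁pos : (0:ℝ) < (n₁:ℝ) := lt_of_lt_of_le (by linarith) han₁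
    have h1 : (n₁:ℝ) * δ < (n₁:ℝ) * Δ n₁ := mul_lt_mul_of_pos_left hcon hn₁pos
    have h2 : A ≤ (n₁:ℝ) * δ := by
      have h3 := mul_le_mul_of_nonneg_right han₁ hδpos.le
      have h4 : a * δ = A := by rw [hadef]; field_simp
      linarith
    linarith
  have hPL : ∀ u, f u - fstar ≤ δ → 2 * μs * (f u - fstar) ≤ ‖f' u‖ ^ 2 := by
    intro u hu
    have hws_lev : f ws - fstar ≤ δ := by rw [hwsf]; linarith
    have h1 := hsc u ws hu hws_lev
    rw [hwsf] at h1
    have h2 : -(‖f' u‖ * ‖ws - u‖) ≤ ⟪f' u, ws - u⟫ :=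
      (abs_le.mp (abs_real_inner_le_norm _ _)).1
    have hr : 0 ≤ ‖ws - u‖ := norm_nonneg _
    nlinarith [sq_nonneg (‖f' u‖ - μs * ‖ws - u‖)]
  have hstep2 : ∀ t, Δ t ≤ δ → Δ (t+1) ≤ (1 - μs/Ls) * Δ t := by
    intro t ht
    have h1 := gd_aux_local_descent f f' hgrad hconv Ls fstar δ hLs hloc (w t) ht
    have h2 := (hls t).2 (1/Ls)
    have h3 : w t - (1/Ls) • f' (w t) = w t + (1/Ls) • (-(f' (w t))) := by
      rw [smul_neg, sub_eq_add_neg]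
    rw [h3] at h2
    have h4 : f (w (t+1)) ≤ f (w t) - ‖f' (w t)‖ ^ 2 / (2*Ls) := h2.trans h1
    have h5 := hPL (w t) ht
    have h6 : (2 * μs * Δ t) / (2*Ls) ≤ ‖f' (w t)‖ ^ 2 / (2*Ls) :=
      div_le_div_of_nonneg_right h5 (by positivity)
    have h7 : (2 * μs * Δ t) / (2*Ls) = (μs/Ls) * Δ t := by field_simp
    simp only [hΔdef] at *
    linarith [h7 ▸ h6]
  set ρ := Real.exp (-(μs/Ls)) with hρdef
  have hρ0 : 0 ≤ ρ := (Real.exp_pos _).le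
  have hρ1 : ρ ≤ 1 := Real.exp_le_one_iff.mpr (by positivity |> neg_nonpos_of_nonneg)
  have hfac : 1 - μs/Ls ≤ ρ := by
    have := Real.add_one_le_exp (-(μs/Ls))
    linarith
  have hphase2 : ∀ k, Δ (n₁ + k) ≤ δ * ρ ^ k := by
    intro k
    induction k with
    | zero => simpa using hΔn₁
    | succ m ih =>
      have hlev : Δ (n₁ + m) ≤ δ := by
        have : δ * ρ ^ m ≤ δ * 1 :=
          mul_le_mul_of_nonneg_left (pow_le_one₀ hρ0 hρ1) hδpos.le
        linarith
      have h1 := hstep2 (n₁+m) hlev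
      have h2 : (1 - μs/Ls) * Δ (n₁+m) ≤ ρ * Δ (n₁+m) :=
        mul_le_mul_of_nonneg_right hfac (hΔnn _)
      have h3 : ρ * Δ (n₁+m) ≤ ρ * (δ * ρ^m) := mul_le_mul_of_nonneg_left ih hρ0
      have h4 : n₁ + (m+1) = (n₁ + m) + 1 := rfl
      rw [h4]
      calc Δ ((n₁+m)+1) ≤ (1 - μs/Ls) * Δ (n₁+m) := h1
      _ ≤ ρ * (δ * ρ^m) := h2.trans h3
      _ = δ * ρ^(m+1) := by ring
  obtain ⟨k, rfl⟩ : ∃ k, T = n₁ + k := ⟨T - n₁, (Nat.add_sub_cancel' hn₁T).symm⟩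
  have hk : (Ls/μs) * Real.log (δ/ε) ≤ (k:ℝ) := by
    push_cast at hTn₁
    linarith
  have hfin : δ * ρ ^ k ≤ ε := by
    have h1 : ρ ^ k = Real.exp ((k:ℝ) * (-(μs/Ls))) := (Real.exp_nat_mul _ k).symm
    have h2 : (k:ℝ) * (-(μs/Ls)) ≤ -Real.log (δ/ε) := by
      have h3 := mul_le_mul_of_nonneg_left hk (div_pos hμs hLs).le
      have heq : (μs/Ls) * ((Ls/μs)*Real.log (δ/ε)) = Real.log (δ/ε) := by
        field_simp
      rw [heq] at h3
      linarith
    have h3 : Real.exp ((k:ℝ)*(-(μs/Ls))) ≤ Real.exp (-Real.log (δ/ε)) :=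
      Real.exp_le_exp.mpr h2
    have h4 : Real.exp (-Real.log (δ/ε)) = ε/δ := by
      rw [Real.exp_neg, Real.exp_log (by positivity), inv_div]
    have h5 : δ * ρ ^ k ≤ δ * (ε/δ) := by
      rw [h1]
      exact mul_le_mul_of_nonneg_left (h4 ▸ h3) hδpos.le
    have h6 : δ * (ε/δ) = ε := by field_simp
    linarith
  exact (hphase2 k).trans hfin
end

section
/- Let f : ℝ^d → ℝ be differentiable, glocally (L, L_*, δ)-smooth, and satisfy the μ-PL inequality: (1/2)‖∇f(u)‖² ≥ μ(f(u) − f_*) for all u ∈ ℝ^d, where f_* = inf f. Assume Δ₀ = f(w₀) − f_* > δ > ε > 0 and let (w_t) be gradient-descent iterates w_{t+1} = w_t − η_t∇f(w_t) with each η_t chosen by exact line optimization. Then f(w_T) − f_* ≤ ε for every natural number T with T ≥ ⌈(L/μ)log(Δ₀/δ)⌉ + ⌈(L_*/μ)log(δ/ε)⌉. (Convexity is not assumed.) -/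
open Real Set

variable {E : Type*} [NormedAddCommGroup E] [InnerProductSpace ℝ E] [CompleteSpace E]

lemma myLineDeriv (f : E → ℝ) (f' : E → E) (hdiff : ∀ x, HasGradientAt f (f' x) x)
    (w g : E) (η : ℝ) :
    HasDerivAt (fun s : ℝ => f (w - s • g)) (-(inner ℝ (f' (w - η • g)) g : ℝ)) η := by
  have hp : HasDerivAt (fun s : ℝ => w - s • g) (-g) η := by
    simpa using ((hasDerivAt_id η).smul_const g).const_sub w
  have := ((hdiff (w - η • g)).hasFDerivAt.comp_hasDerivAt η hp)
  exact (by simpa [InnerProductSpace.toDual_apply_apply, inner_neg_right] using this :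
    HasDerivAt (f ∘ fun s : ℝ => w - s • g) (-(inner ℝ (f' (w - η • g)) g : ℝ)) η)

/-- Key descent lemma under a conditional Lipschitz bound. -/
lemma myDescent (f : E → ℝ) (f' : E → E) (hdiff : ∀ x, HasGradientAt f (f' x) x)
    (w : E) (C : ℝ) (hC : 0 < C)
    (hlip : ∀ η : ℝ, η ∈ Icc 0 (1/C) → f (w - η • f' w) ≤ f w →
      ‖f' w - f' (w - η • f' w)‖ ≤ C * (η * ‖f' w‖)) :
    f (w - (1/C) • f' w) ≤ f w - 1/(2*C) * ‖f' w‖^2 := by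
  set g := f' w with hg
  by_cases hg0 : g = 0
  · simp [hg0, hC.ne', div_nonneg]
  have hng : 0 < ‖g‖ := norm_pos_iff.mpr hg0
  set h : ℝ → ℝ := fun s => f (w - s • g) with hh
  -- For every c ∈ (0, 1/2], fencing gives the bound with slack c.
  have key : ∀ c : ℝ, 0 < c → c ≤ 1/2 →
      h (1/C) ≤ h 0 - (1-c)*(1/C)*‖g‖^2 + C*(1/C)^2/2*‖g‖^2 := by
    intro c hc hc2
    set B : ℝ → ℝ := fun s => h 0 - (1-c)*s*‖g‖^2 + C*s^2/2*‖g‖^2 with hB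
    have hB' : ∀ s : ℝ, HasDerivAt B (-(1-c)*‖g‖^2 + C*s*‖g‖^2) s := by
      intro s
      have : HasDerivAt (fun s : ℝ => h 0 - (1-c)*s*‖g‖^2 + C*s^2/2*‖g‖^2)
          (0 - (1-c)*1*‖g‖^2 + C*(2*s)/2*‖g‖^2) s := by
        apply HasDerivAt.add
        · exact (hasDerivAt_const _ _).sub ((((hasDerivAt_id s).const_mul (1-c)).mul_const _))
        · have : HasDerivAt (fun s : ℝ => s^2) (2*s) s := by
            simpa using (hasDerivAt_pow 2 s)
          exact ((this.const_mul C).div_const 2).mul_const _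
      convert this using 1; ring
    have hcont : ContinuousOn h (Icc 0 (1/C)) := fun s _ =>
      ((myLineDeriv f f' hdiff w g s).continuousAt).continuousWithinAt
    have main : ∀ ⦃x⦄, x ∈ Icc 0 (1/C) → h x ≤ B x := by
      apply image_le_of_deriv_right_lt_deriv_boundary (f' := fun s => -(inner ℝ (f' (w - s • g)) g : ℝ))
        hcont
        (fun s _ => (myLineDeriv f f' hdiff w g s).hasDerivWithinAt)
        (by simp [hB]) hB'
      intro x hx hbd
      -- boundary: h x = B x ⇒ h x ≤ h 0 ⇒ lipschitz applies
      have hx0 : 0 ≤ x := hx.1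
      have hx1 : x ≤ 1/C := le_of_lt hx.2
      have hBle : B x ≤ h 0 := by
        have h1 : C * x ≤ 1 := by
          have := mul_le_mul_of_nonneg_left hx1 hC.le
          rwa [mul_one_div, div_self hC.ne'] at this
        have : C*x^2/2*‖g‖^2 ≤ (1-c)*x*‖g‖^2 := by
          have hle : C*x/2 ≤ 1 - c := by nlinarith
          have : C*x^2/2 ≤ (1-c)*x := by nlinarith
          nlinarith [sq_nonneg ‖g‖]
        simp only [hB]; linarith
      have hsub : f (w - x • g) ≤ f w := by
        have : h x ≤ h 0 := hbd ▸ hBle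
        simpa [hh] using this
      have hl := hlip x ⟨hx0, hx1⟩ hsub
      have hinner : (inner ℝ (g - f' (w - x • g)) g : ℝ) ≤ C * x * ‖g‖^2 := by
        calc (inner ℝ (g - f' (w - x • g)) g : ℝ) ≤ ‖g - f' (w - x • g)‖ * ‖g‖ :=
              real_inner_le_norm _ _
          _ ≤ (C * (x * ‖g‖)) * ‖g‖ := by
              apply mul_le_mul_of_nonneg_right _ (norm_nonneg g)
              simpa [hg] using hl
          _ = C * x * ‖g‖^2 := by ring
      have : -(inner ℝ (f' (w - x • g)) g : ℝ) ≤ -‖g‖^2 + C*x*‖g‖^2 := by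
        have hexp : (inner ℝ (g - f' (w - x • g)) g : ℝ)
            = ‖g‖^2 - (inner ℝ (f' (w - x • g)) g : ℝ) := by
          rw [inner_sub_left, real_inner_self_eq_norm_sq]
        linarith [hinner, hexp ▸ hinner]
      calc -(inner ℝ (f' (w - x • g)) g : ℝ) ≤ -‖g‖^2 + C*x*‖g‖^2 := this
        _ < -(1-c)*‖g‖^2 + C*x*‖g‖^2 := by nlinarith [mul_pos hc (pow_pos hng 2)]
    have := main (right_mem_Icc.mpr (by positivity : (0:ℝ) ≤ 1/C))
    simpa [hB] using this
  -- take c → 0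
  have hfinal : h (1/C) ≤ h 0 - (1/C)*‖g‖^2 + C*(1/C)^2/2*‖g‖^2 := by
    apply le_of_forall_pos_le_add
    intro ε hε
    set c := min (1/2) (ε / ((1/C)*‖g‖^2)) with hcdef
    have hden : 0 < (1/C)*‖g‖^2 := by positivity
    have hc : 0 < c := lt_min (by norm_num) (div_pos hε hden)
    have := key c hc (min_le_left _ _)
    have hcε : c * ((1/C)*‖g‖^2) ≤ ε := by
      calc c * ((1/C)*‖g‖^2) ≤ (ε / ((1/C)*‖g‖^2)) * ((1/C)*‖g‖^2) :=
            mul_le_mul_of_nonneg_right (min_le_right _ _) hden.le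
        _ = ε := div_mul_cancel₀ _ hden.ne'
    nlinarith
  have : h 0 - (1/C)*‖g‖^2 + C*(1/C)^2/2*‖g‖^2 = h 0 - 1/(2*C)*‖g‖^2 := by
    field_simp; ring
  rw [this] at hfinal
  simpa [hh] using hfinal

/-- Iteration complexity of gradient descent with exact line optimization
under glocal (L, L_*, δ)-smoothness and the μ-PL inequality (no convexity assumed). -/
theorem gd_lo_glocal_pl_complexity {d : ℕ}
    (f : EuclideanSpace ℝ (Fin d) → ℝ)
    (f' : EuclideanSpace ℝ (Fin d) → EuclideanSpace ℝ (Fin d))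
    (L Ls δ ε μ fstar : ℝ)
    (hL : 0 < L) (hLs : 0 < Ls) (hμ : 0 < μ)
    (hdiff : ∀ x, HasGradientAt f (f' x) x)
    (hfstar : IsGLB (Set.range f) fstar)
    (hglob : ∀ u v, ‖f' u - f' v‖ ≤ L * ‖u - v‖)
    (hloc : ∀ u v, f u - fstar ≤ δ → f v - fstar ≤ δ → ‖f' u - f' v‖ ≤ Ls * ‖u - v‖)
    (hpl : ∀ u, 1 / 2 * ‖f' u‖ ^ 2 ≥ μ * (f u - fstar))
    (w : ℕ → EuclideanSpace ℝ (Fin d))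
    (hΔδ : f (w 0) - fstar > δ) (hδε : δ > ε) (hε : ε > 0)
    (hstep : ∀ t : ℕ,
      (∃ η : ℝ, w (t + 1) = w t - η • f' (w t)) ∧
        ∀ η : ℝ, f (w (t + 1)) ≤ f (w t - η • f' (w t))) :
    ∀ T : ℕ,
      (⌈L / μ * Real.log ((f (w 0) - fstar) / δ)⌉ + ⌈Ls / μ * Real.log (δ / ε)⌉ : ℤ) ≤ T →
      f (w T) - fstar ≤ ε := by
  have hlow : ∀ x, fstar ≤ f x := fun x => hfstar.1 ⟨x, rfl⟩
  have hmono : ∀ t, f (w (t+1)) ≤ f (w t) := by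
    intro t
    simpa using (hstep t).2 0
  have hmono' : ∀ m n : ℕ, m ≤ n → f (w n) ≤ f (w m) := by
    intro m n hmn
    induction n with
    | zero => simp_all
    | succ k ih =>
      rcases Nat.lt_or_ge m (k+1) with h | h
      · exact le_trans (hmono k) (ih (Nat.lt_succ_iff.mp h))
      · have : m = k + 1 := le_antisymm hmn h
        simp [this]
  -- generic one-step contraction
  have step : ∀ (t : ℕ) (C : ℝ), 0 < C →
      (∀ η ∈ Set.Icc (0:ℝ) (1/C), f (w t - η • f' (w t)) ≤ f (w t) →
        ‖f' (w t) - f' (w t - η • f' (w t))‖ ≤ C * (η * ‖f' (w t)‖)) →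
      f (w (t+1)) - fstar ≤ Real.exp (-(μ/C)) * (f (w t) - fstar) := by
    intro t C hC hlip
    have hd := myDescent f f' hdiff (w t) C hC hlip
    have hls := (hstep t).2 (1/C)
    have hpl' := hpl (w t)
    have hΔ : 0 ≤ f (w t) - fstar := sub_nonneg.mpr (hlow _)
    have hq := mul_le_mul_of_nonneg_left hpl' (le_of_lt (one_div_pos.mpr hC))
    have e1 : 1/C*(μ*(f (w t) - fstar)) = μ/C*(f (w t)-fstar) := by ring
    have e2 : 1/C*(1/2*‖f' (w t)‖^2) = 1/(2*C)*‖f' (w t)‖^2 := by ring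
    have h1 : f (w (t+1)) - fstar ≤ (1 - μ/C) * (f (w t) - fstar) := by
      have e3 : (1-μ/C)*(f (w t) - fstar) = (f (w t) - fstar) - μ/C*(f (w t) - fstar) := by ring
      linarith [hd, hls, hq, e1 ▸ (e2 ▸ hq)]
    have h2 : (1 - μ/C) ≤ Real.exp (-(μ/C)) := by
      have := Real.add_one_le_exp (-(μ/C)); linarith
    calc f (w (t+1)) - fstar ≤ (1 - μ/C) * (f (w t) - fstar) := h1
      _ ≤ Real.exp (-(μ/C)) * (f (w t) - fstar) := mul_le_mul_of_nonneg_right h2 hΔ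
  -- norm identity
  have hnorm : ∀ (t : ℕ) (η : ℝ), 0 ≤ η →
      ‖w t - (w t - η • f' (w t))‖ = η * ‖f' (w t)‖ := by
    intro t η hη
    rw [sub_sub_cancel, norm_smul, Real.norm_eq_abs, abs_of_nonneg hη]
  -- global step
  have gstep : ∀ t, f (w (t+1)) - fstar ≤ Real.exp (-(μ/L)) * (f (w t) - fstar) := by
    intro t
    apply step t L hL
    intro η hη _
    calc ‖f' (w t) - f' (w t - η • f' (w t))‖ ≤ L * ‖w t - (w t - η • f' (w t))‖ :=
          hglob _ _
      _ = L * (η * ‖f' (w t)‖) := by rw [hnorm t η hη.1]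
  -- local step
  have lstep : ∀ t, f (w t) - fstar ≤ δ →
      f (w (t+1)) - fstar ≤ Real.exp (-(μ/Ls)) * (f (w t) - fstar) := by
    intro t ht
    apply step t Ls hLs
    intro η hη hle
    calc ‖f' (w t) - f' (w t - η • f' (w t))‖ ≤ Ls * ‖w t - (w t - η • f' (w t))‖ :=
          hloc _ _ ht (by linarith)
      _ = Ls * (η * ‖f' (w t)‖) := by rw [hnorm t η hη.1]
  -- phase 1 geometric
  have phase1 : ∀ n : ℕ, f (w n) - fstar ≤ Real.exp (-(μ/L))^n * (f (w 0) - fstar) := by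
    intro n
    induction n with
    | zero => simp
    | succ k ih =>
      calc f (w (k+1)) - fstar ≤ Real.exp (-(μ/L)) * (f (w k) - fstar) := gstep k
        _ ≤ Real.exp (-(μ/L)) * (Real.exp (-(μ/L))^k * (f (w 0) - fstar)) :=
            mul_le_mul_of_nonneg_left ih (Real.exp_pos _).le
        _ = Real.exp (-(μ/L))^(k+1) * (f (w 0) - fstar) := by ring
  set Δ0 := f (w 0) - fstar with hΔ0
  have hΔ0pos : 0 < Δ0 := lt_trans (lt_trans hε hδε) hΔδ
  have hδpos : 0 < δ := lt_trans hε hδε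
  set n1 := (⌈L / μ * Real.log (Δ0 / δ)⌉).toNat with hn1
  set n2 := (⌈Ls / μ * Real.log (δ / ε)⌉).toNat with hn2
  -- generic decay estimate
  have decay : ∀ (K a b : ℝ) (n : ℕ), 0 < K → 0 < a → 0 < b →
      ((⌈K / μ * Real.log (a / b)⌉).toNat : ℝ) ≤ (n : ℝ) →
      Real.exp (-(μ/K))^n * a ≤ b := by
    intro K a b n hK ha hb hn
    have hval : K / μ * Real.log (a / b) ≤ ((⌈K / μ * Real.log (a / b)⌉).toNat : ℝ) := by
      calc K / μ * Real.log (a / b) ≤ (⌈K / μ * Real.log (a / b)⌉ : ℝ) := Int.le_ceil _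
        _ ≤ ((⌈K / μ * Real.log (a / b)⌉).toNat : ℝ) := by
            exact_mod_cast Int.self_le_toNat _
    have hvn : K / μ * Real.log (a / b) ≤ (n : ℝ) := le_trans hval hn
    have key : (n : ℝ) * (-(μ/K)) ≤ -Real.log (a / b) := by
      have h1 : Real.log (a / b) ≤ (n : ℝ) * (μ/K) := by
        have hμK : 0 < μ/K := div_pos hμ hK
        have := mul_le_mul_of_nonneg_right hvn hμK.le
        calc Real.log (a / b) = K / μ * Real.log (a / b) * (μ/K) := by
              field_simp
          _ ≤ (n : ℝ) * (μ/K) := this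
      linarith
    have : Real.exp (-(μ/K))^n ≤ b / a := by
      rw [← Real.exp_nat_mul]
      calc Real.exp ((n : ℝ) * (-(μ/K))) ≤ Real.exp (-Real.log (a/b)) :=
            Real.exp_le_exp.mpr key
        _ = b / a := by
            rw [Real.exp_neg, Real.exp_log (div_pos ha hb)]
            rw [inv_div]
    calc Real.exp (-(μ/K))^n * a ≤ (b / a) * a := mul_le_mul_of_nonneg_right this ha.le
      _ = b := div_mul_cancel₀ _ ha.ne'
  -- Δ_{n1} ≤ δ
  have hphase1 : f (w n1) - fstar ≤ δ := by
    calc f (w n1) - fstar ≤ Real.exp (-(μ/L))^n1 * Δ0 := phase1 n1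
      _ ≤ δ := decay L Δ0 δ n1 hL hΔ0pos hδpos le_rfl
  -- phase 2 geometric
  have phase2 : ∀ s : ℕ, f (w (n1 + s)) - fstar ≤ Real.exp (-(μ/Ls))^s * δ := by
    intro s
    induction s with
    | zero => simpa using hphase1
    | succ k ih =>
      have hle1 : Real.exp (-(μ/Ls))^k ≤ 1 :=
        pow_le_one₀ (Real.exp_pos _).le (Real.exp_le_one_iff.mpr (neg_nonpos.mpr (by positivity)))
      have hkδ : f (w (n1 + k)) - fstar ≤ δ := by
        calc f (w (n1 + k)) - fstar ≤ Real.exp (-(μ/Ls))^k * δ := ih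
          _ ≤ 1 * δ := mul_le_mul_of_nonneg_right hle1 hδpos.le
          _ = δ := one_mul δ
      have := lstep (n1 + k) hkδ
      calc f (w (n1 + (k+1))) - fstar = f (w ((n1 + k) + 1)) - fstar := by ring_nf
        _ ≤ Real.exp (-(μ/Ls)) * (f (w (n1 + k)) - fstar) := lstep (n1 + k) hkδ
        _ ≤ Real.exp (-(μ/Ls)) * (Real.exp (-(μ/Ls))^k * δ) :=
            mul_le_mul_of_nonneg_left ih (Real.exp_pos _).le
        _ = Real.exp (-(μ/Ls))^(k+1) * δ := by ring
  have hphase2 : f (w (n1 + n2)) - fstar ≤ ε := by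
    calc f (w (n1 + n2)) - fstar ≤ Real.exp (-(μ/Ls))^n2 * δ := phase2 n2
      _ ≤ ε := decay Ls δ ε n2 hLs hδpos hε le_rfl
  intro T hT
  have hTn : n1 + n2 ≤ T := by
    have h1 : (0:ℤ) ≤ ⌈L / μ * Real.log (Δ0 / δ)⌉ := by
      apply Int.ceil_nonneg
      have : (1:ℝ) ≤ Δ0 / δ := (one_le_div hδpos).mpr (le_of_lt hΔδ)
      have hlog : 0 ≤ Real.log (Δ0 / δ) := Real.log_nonneg this
      exact mul_nonneg (by positivity) hlog
    have h2 : (0:ℤ) ≤ ⌈Ls / μ * Real.log (δ / ε)⌉ := by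
      apply Int.ceil_nonneg
      have : (1:ℝ) ≤ δ / ε := (one_le_div hε).mpr (le_of_lt hδε)
      have hlog : 0 ≤ Real.log (δ / ε) := Real.log_nonneg this
      exact mul_nonneg (by positivity) hlog
    omega
  calc f (w T) - fstar ≤ f (w (n1 + n2)) - fstar := by
        have := hmono' (n1 + n2) T hTn; linarith
    _ ≤ ε := hphase2
end
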